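/- arXiv:1411.6306 — 7 statements merged into one kernel-verified Lean document; each statement's English description precedes it below -/
import Mathlib

section
/- Let A, B, C, D be integers with A² + B² + C² = 3D², gcd(A, B, C) = 1 and D ≠ 0. Then D is odd, each of A, B, C is odd, and none of A, B, C is divisible by 3; equivalently, each of A, B, C is congruent to 1 or −1 modulo 6. -/
private lemma key4 : ∀ a b c d : ZMod 4, a^2 + b^2 + c^2 = 3 * d^2 →
    ((a = 0 ∨ a = 2) ∧ (b = 0 ∨ b = 2) ∧ (c = 0 ∨ c = 2)) ∨
    ((a = 1 ∨ a = 3) ∧ (b = 1 ∨ b = 3) ∧ (c = 1 ∨ c = 3) ∧ (d = 1 ∨ d = 3)) := by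
  decide

private lemma key3 : ∀ a b c d : ZMod 3, a^2 + b^2 + c^2 = 3 * d^2 →
    (a = 0 ∧ b = 0 ∧ c = 0) ∨ (a ≠ 0 ∧ b ≠ 0 ∧ c ≠ 0) := by
  decide

private lemma even_of_zmod4 {A : ℤ} (h : (A : ZMod 4) = 0 ∨ (A : ZMod 4) = 2) : 2 ∣ A := by
  have h2 : (ZMod.castHom (show (2:ℕ) ∣ 4 by norm_num) (ZMod 2)) ((A : ZMod 4)) = 0 := by
    rcases h with h | h <;> rw [h] <;> decide
  rw [map_intCast, ZMod.intCast_zmod_eq_zero_iff_dvd] at h2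
  exact h2

private lemma odd_of_zmod4 {A : ℤ} (h : (A : ZMod 4) = 1 ∨ (A : ZMod 4) = 3) : Odd A := by
  rw [Int.odd_iff]
  by_contra hc
  have hd : (2:ℤ) ∣ A := by omega
  have h0 : (ZMod.castHom (show (2:ℕ) ∣ 4 by norm_num) (ZMod 2)) ((A : ZMod 4)) = 0 := by
    rw [map_intCast, ZMod.intCast_zmod_eq_zero_iff_dvd]
    exact_mod_cast hd
  rcases h with h | h <;> rw [h] at h0 <;> exact absurd h0 (by decide)

theorem stmt_3 (A B C D : ℤ) (heq : A^2 + B^2 + C^2 = 3 * D^2)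
    (hgcd : Int.gcd (Int.gcd A B) C = 1) (hD : D ≠ 0) :
    Odd D ∧ Odd A ∧ Odd B ∧ Odd C ∧
    ¬ (3 ∣ A) ∧ ¬ (3 ∣ B) ∧ ¬ (3 ∣ C) ∧
    (A ≡ 1 [ZMOD 6] ∨ A ≡ -1 [ZMOD 6]) ∧
    (B ≡ 1 [ZMOD 6] ∨ B ≡ -1 [ZMOD 6]) ∧
    (C ≡ 1 [ZMOD 6] ∨ C ≡ -1 [ZMOD 6]) := by
  have hgcdZ : (Int.gcd (Int.gcd A B) C : ℤ) = 1 := by exact_mod_cast hgcd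
  have h4 : (A : ZMod 4)^2 + (B : ZMod 4)^2 + (C : ZMod 4)^2 = 3 * (D : ZMod 4)^2 := by
    have := congrArg (fun n : ℤ => (n : ZMod 4)) heq
    push_cast at this
    exact this
  have h3 : (A : ZMod 3)^2 + (B : ZMod 3)^2 + (C : ZMod 3)^2 = 3 * (D : ZMod 3)^2 := by
    have := congrArg (fun n : ℤ => (n : ZMod 3)) heq
    push_cast at this
    exact this
  -- mod 4 analysis
  rcases key4 _ _ _ _ h4 with ⟨ha, hb, hc⟩ | ⟨ha, hb, hc, hd⟩
  · exfalso
    have h2 : (2 : ℤ) ∣ Int.gcd (Int.gcd A B) C :=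
      Int.dvd_coe_gcd (Int.dvd_coe_gcd (even_of_zmod4 ha) (even_of_zmod4 hb)) (even_of_zmod4 hc)
    rw [hgcdZ] at h2
    norm_num at h2
  have hAo := odd_of_zmod4 ha
  have hBo := odd_of_zmod4 hb
  have hCo := odd_of_zmod4 hc
  -- D odd: from heq mod 8? simpler: A,B,C odd → sum ≡ 3 mod 4 handled; get D odd from key4 d part
  have hDo : Odd D := odd_of_zmod4 hd
  -- mod 3 analysis
  rcases key3 _ _ _ _ h3 with ⟨ha3, hb3, hc3⟩ | ⟨ha3, hb3, hc3⟩
  · exfalso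
    rw [ZMod.intCast_zmod_eq_zero_iff_dvd] at ha3 hb3 hc3
    have h3d : (3 : ℤ) ∣ Int.gcd (Int.gcd A B) C :=
      Int.dvd_coe_gcd (Int.dvd_coe_gcd ha3 hb3) hc3
    rw [hgcdZ] at h3d
    norm_num at h3d
  rw [Ne, ZMod.intCast_zmod_eq_zero_iff_dvd] at ha3 hb3 hc3
  have mod6 : ∀ x : ℤ, Odd x → ¬ ((3:ℤ) ∣ x) → (x ≡ 1 [ZMOD 6] ∨ x ≡ -1 [ZMOD 6]) := by
    intro x hx h3x
    rw [Int.odd_iff] at hx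
    rw [Int.dvd_iff_emod_eq_zero] at h3x
    unfold Int.ModEq
    omega
  exact ⟨hDo, hAo, hBo, hCo, ha3, hb3, hc3, mod6 A hAo ha3, mod6 B hBo hb3, mod6 C hCo hc3⟩
end

section
/- Let q be a quaternion with rational components, let m, n be integers, and set r = (m − n/2) + (n/2)·(i + j + k). Then (q·r)·(i + j + k)·(conjugate of (q·r)) = (m² − mn + n²) · ( q·(i + j + k)·(conjugate of q) ). -/
open scoped Quaternion

set_option maxHeartbeats 1600000 in
theorem stmt_5 (q : ℍ[ℚ]) (m n : ℤ) :
    let i : ℍ[ℚ] := ⟨0, 1, 0, 0⟩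
    let j : ℍ[ℚ] := ⟨0, 0, 1, 0⟩
    let k : ℍ[ℚ] := ⟨0, 0, 0, 1⟩
    let r : ℍ[ℚ] := ((m : ℚ) - (n : ℚ)/2 : ℚ) • (1 : ℍ[ℚ]) + ((n : ℚ)/2) • (i + j + k)
    (q * r) * (i + j + k) * star (q * r) =
      ((m : ℚ)^2 - (m : ℚ)*(n : ℚ) + (n : ℚ)^2) • (q * (i + j + k) * star q) := by
  intro i j k r
  ext <;>
    simp only [r, Quaternion.re_mul, Quaternion.imI_mul, Quaternion.imJ_mul,
      Quaternion.imK_mul, Quaternion.re_add, Quaternion.imI_add, Quaternion.imJ_add,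
      Quaternion.imK_add, Quaternion.re_smul, Quaternion.imI_smul, Quaternion.imJ_smul,
      Quaternion.imK_smul, Quaternion.re_one, Quaternion.imI_one, Quaternion.imJ_one,
      Quaternion.imK_one, Quaternion.re_star, Quaternion.imI_star, Quaternion.imJ_star,
      Quaternion.imK_star, smul_eq_mul] <;>
    dsimp only [i, j, k] <;>
    ring
end

section
/- Let 𝒜 = {n : ℤ | ∃ x y : ℤ, gcd(x, y) = 1 ∧ n = 3x² − y²}, ℬ = {n : ℤ | ∃ x y : ℤ, gcd(x, y) = 1 ∧ n = x² + y²}, and 𝒞 = {n : ℤ | ∃ x y : ℤ, gcd(x, y) = 1 ∧ n = 2(x² − xy + y²)}. Then 𝒜 ∩ ℬ is a proper subset of 𝒞, i.e., 𝒜 ∩ ℬ ⊆ 𝒞 and 𝒞 ⊄ 𝒜 ∩ ℬ. -/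
set_option maxHeartbeats 1000000

/-- linear combination recovering one factor's norm from composition components -/
lemma comp_combo (c d s t : ℤ) (hcd : IsCoprime c d) :
    ∃ A B : ℤ, A*(c*s-d*t) + B*(c*t+d*s-d*t) = s^2-s*t+t^2 := by
  obtain ⟨α, β, h⟩ := hcd
  exact ⟨α*(s-t) - β*t, α*t + β*s, by linear_combination (s^2-s*t+t^2) * h⟩

lemma comp_dvd {c d s t w : ℤ} (hcd : IsCoprime c d) (h1 : w ∣ c*s-d*t)
    (h2 : w ∣ c*t+d*s-d*t) : w ∣ s^2-s*t+t^2 := by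
  obtain ⟨A, B, h⟩ := comp_combo c d s t hcd
  exact h ▸ dvd_add (h1.mul_left A) (h2.mul_left B)

lemma compose_coprime {M N u v s t : ℤ} (huv : IsCoprime u v) (hst : IsCoprime s t)
    (hMN : IsCoprime M N) (hM : M = u^2-u*v+v^2) (hN : N = s^2-s*t+t^2) :
    ∃ P Q : ℤ, IsCoprime P Q ∧ M*N = P^2-P*Q+Q^2 := by
  refine ⟨u*s-v*t, u*t+v*s-v*t, ?_, by rw [hM, hN]; ring⟩
  obtain ⟨A, B, hAB⟩ := comp_combo u v s t huv
  obtain ⟨A', B', hAB'⟩ := comp_combo s t u v hst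
  obtain ⟨e, f, hef⟩ := hMN
  refine ⟨e*A' + f*A, e*B' + f*B, ?_⟩
  have h1 : A'*(s*u-t*v) + B'*(s*v+t*u-t*v) = u^2-u*v+v^2 := hAB'
  linear_combination e*h1 + f*hAB + hef + e*hM.symm + f*hN.symm

lemma compose_prime {p : ℕ} (hp : p.Prime) (hp3 : p % 3 = 1) {M c d s t : ℤ}
    (hcd : IsCoprime c d) (hst : IsCoprime s t)
    (hpe : (p:ℤ) = c^2-c*d+d^2) (hM : M = s^2-s*t+t^2) :
    ∃ P Q : ℤ, IsCoprime P Q ∧ (p:ℤ)*M = P^2-P*Q+Q^2 := by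
  have hdvd : ∀ c' d' : ℤ, IsCoprime c' d' → (p:ℤ) = c'^2-c'*d'+d'^2 →
      ¬ IsCoprime (c'*s-d'*t) (c'*t+d'*s-d'*t) →
      (p:ℤ) ∣ c'*s-d'*t ∧ (p:ℤ) ∣ c'*t+d'*s-d'*t := by
    intro c' d' hcd' hpe' hnc
    set P := c'*s-d'*t with hP
    set Q := c'*t+d'*s-d'*t with hQ
    have hg : Int.gcd P Q ≠ 1 := fun hg => hnc (Int.isCoprime_iff_gcd_eq_one.mpr hg)
    have hdP : (↑(Int.gcd P Q) : ℤ) ∣ P := Int.gcd_dvd_left _ _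
    have hdQ : (↑(Int.gcd P Q) : ℤ) ∣ Q := Int.gcd_dvd_right _ _
    have e1 : s*c'-t*d' = P := by rw [hP]; ring
    have e2 : s*d'+t*c'-t*d' = Q := by rw [hQ]; ring
    have hdp : (↑(Int.gcd P Q) : ℤ) ∣ (p:ℤ) := by
      rw [hpe']
      exact comp_dvd hst (e1 ▸ hdP) (e2 ▸ hdQ)
    have : Int.gcd P Q ∣ p := Int.natCast_dvd_natCast.mp hdp
    rcases (hp.eq_one_or_self_of_dvd _ this) with h1 | h1
    · exact absurd h1 hg
    · exact ⟨h1 ▸ hdP, h1 ▸ hdQ⟩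
  by_cases h1 : IsCoprime (c*s-d*t) (c*t+d*s-d*t)
  · exact ⟨_, _, h1, by rw [hpe, hM]; ring⟩
  have hcd2 : IsCoprime (c-d) (-d) := by
    obtain ⟨α, β, h⟩ := hcd
    exact ⟨α, -(α+β), by linear_combination h⟩
  have hpe2 : (p:ℤ) = (c-d)^2-(c-d)*(-d)+(-d)^2 := by linear_combination hpe
  by_cases h2 : IsCoprime ((c-d)*s-(-d)*t) ((c-d)*t+(-d)*s-(-d)*t)
  · exact ⟨_, _, h2, by rw [hpe2]; rw [hM]; ring⟩
  exfalso
  obtain ⟨hA1, hA2⟩ := hdvd c d hcd hpe h1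
  obtain ⟨hB1, hB2⟩ := hdvd (c-d) (-d) hcd2 hpe2 h2
  have hpZ : Prime (p:ℤ) := Nat.prime_iff_prime_int.mp hp
  have hp2 : p ≠ 2 := by omega
  have hp3' : p ≠ 3 := by omega
  -- p ∣ s*(2c-d) and p ∣ t*(2c-d)
  have hs1 : (p:ℤ) ∣ s*(2*c-d) := by
    have : s*(2*c-d) = (c*s-d*t) + ((c-d)*s-(-d)*t) := by ring
    rw [this]; exact dvd_add hA1 hB1
  have ht1 : (p:ℤ) ∣ t*(2*c-d) := by
    have : t*(2*c-d) = (c*t+d*s-d*t) + ((c-d)*t+(-d)*s-(-d)*t) := by ring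
    rw [this]; exact dvd_add hA2 hB2
  have hst_not : ¬ ((p:ℤ) ∣ s ∧ (p:ℤ) ∣ t) := by
    rintro ⟨hs, ht⟩
    exact hpZ.not_unit (hst.isUnit_of_dvd' hs ht)
  have h2cd : (p:ℤ) ∣ 2*c-d := by
    rcases hpZ.dvd_mul.mp hs1 with h | h
    · rcases hpZ.dvd_mul.mp ht1 with h' | h'
      · exact absurd ⟨h, h'⟩ hst_not
      · exact h'
    · exact h
  have hd1 : (p:ℤ) ∣ d*(s-2*t) := by
    have : d*(s-2*t) = (c*s-d*t) - ((c-d)*s-(-d)*t) := by ring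
    rw [this]; exact dvd_sub hA1 hB1
  have hd2 : (p:ℤ) ∣ d*(2*s-t) := by
    have : d*(2*s-t) = (c*t+d*s-d*t) - ((c-d)*t+(-d)*s-(-d)*t) := by ring
    rw [this]; exact dvd_sub hA2 hB2
  rcases hpZ.dvd_mul.mp hd1 with hd | hst1
  · -- p ∣ d, p ∣ 2c-d ⇒ p ∣ 2c ⇒ p ∣ c ⇒ contradiction
    have h2c : (p:ℤ) ∣ 2*c := by
      have : 2*c = (2*c-d) + d := by ring
      rw [this]; exact dvd_add h2cd hd
    rcases hpZ.dvd_mul.mp h2c with h | h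
    · have : p ∣ 2 := by exact_mod_cast h
      exact hp2 ((Nat.prime_dvd_prime_iff_eq hp Nat.prime_two).mp this)
    · exact hpZ.not_unit (hcd.isUnit_of_dvd' h hd)
  · rcases hpZ.dvd_mul.mp hd2 with hd | hst2
    · have h2c : (p:ℤ) ∣ 2*c := by
        have : 2*c = (2*c-d) + d := by ring
        rw [this]; exact dvd_add h2cd hd
      rcases hpZ.dvd_mul.mp h2c with h | h
      · have : p ∣ 2 := by exact_mod_cast h
        exact hp2 ((Nat.prime_dvd_prime_iff_eq hp Nat.prime_two).mp this)
      · exact hpZ.not_unit (hcd.isUnit_of_dvd' h hd)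
    · -- p ∣ s-2t and p ∣ 2s-t ⇒ p ∣ 3s, p ∣ 3t
      have h3s : (p:ℤ) ∣ 3*s := by
        have : 3*s = 2*(2*s-t) - (s-2*t) := by ring
        rw [this]; exact dvd_sub (hst2.mul_left 2) hst1
      have h3t : (p:ℤ) ∣ 3*t := by
        have : 3*t = (2*s-t) - 2*(s-2*t) := by ring
        rw [this]; exact dvd_sub hst2 (hst1.mul_left 2)
      rcases hpZ.dvd_mul.mp h3s with h | hs
      · have : p ∣ 3 := by exact_mod_cast h
        exact hp3' ((Nat.prime_dvd_prime_iff_eq hp Nat.prime_three).mp this)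
      rcases hpZ.dvd_mul.mp h3t with h | ht
      · have : p ∣ 3 := by exact_mod_cast h
        exact hp3' ((Nat.prime_dvd_prime_iff_eq hp Nat.prime_three).mp this)
      exact hst_not ⟨hs, ht⟩

lemma exists_sq_neg_three (p : ℕ) (hp : p.Prime) (hp3 : p % 3 = 1) :
    ∃ c : ZMod p, c^2 = -3 := by
  haveI : Fact p.Prime := ⟨hp⟩
  obtain ⟨g, hg⟩ := IsCyclic.exists_generator (α := (ZMod p)ˣ)
  have hp2 : 2 ≤ p := hp.two_le
  have horder : orderOf g = p - 1 := by
    rw [orderOf_eq_card_of_forall_mem_zpowers hg, Nat.card_eq_fintype_card,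
      ZMod.card_units]
  obtain ⟨k, hk⟩ : ∃ k, p - 1 = 3*k := ⟨(p-1)/3, by omega⟩
  have hk0 : 0 < k := by omega
  set z := g ^ k with hzdef
  have hzo : orderOf z = 3 := by
    rw [hzdef, orderOf_pow, horder, hk,
      show (3*k).gcd k = k by rw [show 3*k = k*3 by ring]; simp [Nat.gcd_mul_left],
      Nat.mul_div_cancel _ hk0]
  have hz3 : z^3 = 1 := by rw [← hzo]; exact pow_orderOf_eq_one z
  have hz1 : z ≠ 1 := by
    intro h; rw [h, orderOf_one] at hzo; omega
  have hw3 : (z : ZMod p)^3 = 1 := by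
    rw [← Units.val_pow_eq_pow_val, hz3, Units.val_one]
  have hw1 : (z : ZMod p) ≠ 1 := fun h => hz1 (Units.ext (by simpa using h))
  have hq : (z:ZMod p)^2 + (z:ZMod p) + 1 = 0 := by
    have h0 : ((z:ZMod p) - 1) * ((z:ZMod p)^2 + (z:ZMod p) + 1) = 0 := by
      linear_combination hw3
    rcases mul_eq_zero.mp h0 with h|h
    · exact absurd (by linear_combination h) hw1
    · exact h
  exact ⟨2*(z:ZMod p)+1, by linear_combination 4*hq⟩

lemma mod_three_of_sq_neg_three (q : ℕ) (hq : q.Prime) (hq2 : q ≠ 2) (hq3 : q ≠ 3)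
    (c : ZMod q) (hc : c^2 = -3) : q % 3 = 1 := by
  haveI : Fact q.Prime := ⟨hq⟩
  have h2 : (2 : ZMod q) ≠ 0 := by
    intro h
    have : q ∣ 2 := by exact_mod_cast (ZMod.natCast_eq_zero_iff 2 q).mp (by exact_mod_cast h)
    exact hq2 ((Nat.prime_dvd_prime_iff_eq hq Nat.prime_two).mp this)
  set z := (c - 1) * (2:ZMod q)⁻¹ with hz
  have h2z : 2 * z = c - 1 := by
    rw [hz]; field_simp
  have hzq : z^2 + z + 1 = 0 := by
    have h4 : (4 : ZMod q) * (z^2+z+1) = 0 := by linear_combination (2*z+c+1)*h2z + hc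
    have h4' : (4 : ZMod q) ≠ 0 := by
      have : (4:ZMod q) = 2*2 := by norm_num
      rw [this]; exact mul_ne_zero h2 h2
    rcases mul_eq_zero.mp h4 with h|h
    · exact absurd h h4'
    · exact h
  have hz3 : z^3 = 1 := by linear_combination (z-1) * hzq
  have hz1 : z ≠ 1 := by
    intro h
    rw [h] at hzq
    have h3 : (3 : ZMod q) = 0 := by linear_combination hzq
    have : q ∣ 3 := by exact_mod_cast (ZMod.natCast_eq_zero_iff 3 q).mp (by exact_mod_cast h3)
    exact hq3 ((Nat.prime_dvd_prime_iff_eq hq Nat.prime_three).mp this)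
  have hz0 : z ≠ 0 := by
    intro h; rw [h] at hzq; simp at hzq
  obtain ⟨u, hu⟩ := isUnit_iff_ne_zero.mpr hz0
  have hu3 : u^3 = 1 := Units.ext (by rw [Units.val_pow_eq_pow_val, hu, hz3, Units.val_one])
  have huo : orderOf u = 3 := by
    have hd : orderOf u ∣ 3 := orderOf_dvd_of_pow_eq_one hu3
    rcases (Nat.prime_three.eq_one_or_self_of_dvd _ hd) with h|h
    · exact absurd (orderOf_eq_one_iff.mp h) (by rw [← hu] at hz1; exact fun h' => hz1 (by rw [h']; rfl))
    · exact h
  have h3d : (3:ℕ) ∣ q - 1 := by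
    have := huo ▸ orderOf_dvd_card (x := u)
    rwa [ZMod.card_units] at this
  have := hq.two_le
  omega

lemma exists_sq_add_three_sq (p : ℕ) (hp : p.Prime) (hp3 : p % 3 = 1) :
    ∃ a b : ℤ, (p:ℤ) = a^2 + 3*b^2 := by
  haveI : Fact p.Prime := ⟨hp⟩
  obtain ⟨c, hc⟩ := exists_sq_neg_three p hp hp3
  set k := Nat.sqrt p with hk
  have hklt : p < (k+1) * (k+1) := by have := Nat.lt_succ_sqrt' p; nlinarith [this]
  have hkle : k * k ≤ p := by have := Nat.sqrt_le' p; nlinarith [this]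
  have hkne : k * k ≠ p := by
    intro h
    have h2 := hp.two_le
    rcases hp.eq_one_or_self_of_dvd k ⟨k, h.symm⟩ with h1 | h1
    · rw [h1] at h; omega
    · rw [h1] at h; nlinarith

  -- pigeonhole
  have hcard : Fintype.card (ZMod p) < Fintype.card (Fin (k+1) × Fin (k+1)) := by
    rw [ZMod.card, Fintype.card_prod, Fintype.card_fin]
    linarith [hklt]
  obtain ⟨⟨i1, j1⟩, ⟨i2, j2⟩, hne, heq⟩ :=
    Fintype.exists_ne_map_eq_of_card_lt
      (fun ij : Fin (k+1) × Fin (k+1) => ((ij.1.val : ZMod p) * c + (ij.2.val : ZMod p))) hcard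
  set a : ℤ := (j1.val : ℤ) - (j2.val : ℤ) with ha
  set b : ℤ := (i2.val : ℤ) - (i1.val : ℤ) with hb
  have hab : ¬ (a = 0 ∧ b = 0) := by
    rintro ⟨h1, h2⟩
    apply hne
    have : j1.val = j2.val := by omega
    have h4 : i1.val = i2.val := by omega
    exact Prod.ext (Fin.ext h4) (Fin.ext this)
  have hmod : ((a : ZMod p)) = c * (b : ZMod p) := by
    simp only [ha, hb]
    push_cast
    linear_combination heq
  have hdvd : (p:ℤ) ∣ a^2 + 3*b^2 := by
    rw [← ZMod.intCast_zmod_eq_zero_iff_dvd]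
    push_cast
    rw [hmod]
    linear_combination ((b:ZMod p))^2 * hc
  -- bounds
  have hba : a^2 ≤ (k:ℤ)*(k:ℤ) := by
    have h1 : (j1.val : ℤ) ≤ k := by exact_mod_cast Nat.lt_succ_iff.mp j1.isLt
    have h2 : (j2.val : ℤ) ≤ k := by exact_mod_cast Nat.lt_succ_iff.mp j2.isLt
    have h3 : (0:ℤ) ≤ j1.val := Int.natCast_nonneg _
    have h4 : (0:ℤ) ≤ j2.val := Int.natCast_nonneg _
    nlinarith
  have hbb : b^2 ≤ (k:ℤ)*(k:ℤ) := by
    have h1 : (i1.val : ℤ) ≤ k := by exact_mod_cast Nat.lt_succ_iff.mp i1.isLt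
    have h2 : (i2.val : ℤ) ≤ k := by exact_mod_cast Nat.lt_succ_iff.mp i2.isLt
    have h3 : (0:ℤ) ≤ i1.val := Int.natCast_nonneg _
    have h4 : (0:ℤ) ≤ i2.val := Int.natCast_nonneg _
    nlinarith
  have hkp : (k:ℤ)*(k:ℤ) ≤ (p:ℤ) - 1 := by
    have h1 : k*k+1 ≤ p := by omega
    have h2 : ((k*k+1 : ℕ) : ℤ) ≤ (p:ℤ) := Nat.cast_le.mpr h1
    push_cast at h2
    linarith
  have hpos : 0 < a^2 + 3*b^2 := by
    rcases not_and_or.mp hab with h | h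
    · have : 0 < a^2 := by positivity
      nlinarith [sq_nonneg b]
    · have : 0 < b^2 := by positivity
      nlinarith [sq_nonneg a]
  obtain ⟨m, hm⟩ := hdvd
  have hppos : (0:ℤ) < p := by exact_mod_cast hp.pos
  have hmpos : 0 < m := by
    by_contra h
    push_neg at h
    nlinarith
  have hmlt : m < 4 := by
    by_contra h
    push_neg at h
    nlinarith
  have hm123 : m = 1 ∨ m = 2 ∨ m = 3 := by omega
  rcases hm123 with rfl | rfl | rfl
  · exact ⟨a, b, by linarith⟩
  · -- a^2 + 3 b^2 = 2 p : impossible mod 4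
    exfalso
    have hpodd : p % 2 = 1 := (Nat.Prime.mod_two_eq_one_iff_ne_two hp).mpr (by omega)
    have hpoddZ : (p:ℤ) % 2 = 1 := by
      have : ((p % 2 : ℕ) : ℤ) = 1 := by exact_mod_cast hpodd
      omega
    rcases Int.even_or_odd a with ⟨A, hA⟩ | ⟨A, hA⟩ <;>
      rcases Int.even_or_odd b with ⟨B, hB⟩ | ⟨B, hB⟩ <;>
      [ (have e : (p:ℤ)*2 = 4*A^2 + 12*B^2 := by rw [← hm, hA, hB]; ring);
        (have e : (p:ℤ)*2 = 4*A^2 + 12*B^2 + 12*B + 3 := by rw [← hm, hA, hB]; ring);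
        (have e : (p:ℤ)*2 = 4*A^2 + 4*A + 1 + 12*B^2 := by rw [← hm, hA, hB]; ring);
        (have e : (p:ℤ)*2 = 4*A^2 + 4*A + 4 + 12*B^2 + 12*B := by rw [← hm, hA, hB]; ring)] <;>
      [ (obtain ⟨KA, hKA⟩ : ∃ K:ℤ, K = A^2 := ⟨_, rfl⟩);
        (obtain ⟨KA, hKA⟩ : ∃ K:ℤ, K = A^2 := ⟨_, rfl⟩);
        (obtain ⟨KA, hKA⟩ : ∃ K:ℤ, K = A^2 := ⟨_, rfl⟩);
        (obtain ⟨KA, hKA⟩ : ∃ K:ℤ, K = A^2 := ⟨_, rfl⟩)] <;>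
      rw [← hKA] at e <;>
      [ (obtain ⟨KB, hKB⟩ : ∃ K:ℤ, K = B^2 := ⟨_, rfl⟩);
        (obtain ⟨KB, hKB⟩ : ∃ K:ℤ, K = B^2 := ⟨_, rfl⟩);
        (obtain ⟨KB, hKB⟩ : ∃ K:ℤ, K = B^2 := ⟨_, rfl⟩);
        (obtain ⟨KB, hKB⟩ : ∃ K:ℤ, K = B^2 := ⟨_, rfl⟩)] <;>
      rw [← hKB] at e <;> omega
  · -- a^2 + 3 b^2 = 3 p : then 3 ∣ a
    have h3a : (3:ℤ) ∣ a^2 := ⟨p - b^2, by linarith⟩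
    have h3a' : (3:ℤ) ∣ a := Int.prime_three.dvd_of_dvd_pow h3a
    obtain ⟨a1, ha1⟩ := h3a'
    have h9 : a^2 = 9*a1^2 := by rw [ha1]; ring
    exact ⟨b, a1, by linarith⟩

lemma prime_rep (p : ℕ) (hp : p.Prime) (hp3 : p % 3 = 1)
    (hab : ∃ a b : ℤ, (p:ℤ) = a^2 + 3*b^2) :
    ∃ u v : ℤ, IsCoprime u v ∧ (p:ℤ) = u^2 - u*v + v^2 := by
  haveI : Fact p.Prime := ⟨hp⟩
  obtain ⟨a, b, h⟩ := hab
  refine ⟨a+b, 2*b, ?_, by linear_combination h⟩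
  have hpodd : p % 2 = 1 := (Nat.Prime.mod_two_eq_one_iff_ne_two hp).mpr (by omega)
  have hpoddZ : (p:ℤ) % 2 = 1 := by
    have : ((p % 2 : ℕ) : ℤ) = 1 := by exact_mod_cast hpodd
    omega
  -- a+b is odd
  have habodd : (a+b) % 2 = 1 := by
    rcases Int.even_or_odd a with ⟨A, hA⟩ | ⟨A, hA⟩ <;>
      rcases Int.even_or_odd b with ⟨B, hB⟩ | ⟨B, hB⟩ <;>
      [ (have e : (p:ℤ) = 4*A^2 + 12*B^2 := by rw [h, hA, hB]; ring);
        (have e : (p:ℤ) = 4*A^2 + 12*B^2 + 12*B + 3 := by rw [h, hA, hB]; ring);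
        (have e : (p:ℤ) = 4*A^2 + 4*A + 1 + 12*B^2 := by rw [h, hA, hB]; ring);
        (have e : (p:ℤ) = 4*A^2 + 4*A + 4 + 12*B^2 + 12*B := by rw [h, hA, hB]; ring)] <;>
      (obtain ⟨KA, hKA⟩ : ∃ K:ℤ, K = A^2 := ⟨_, rfl⟩) <;>
      rw [← hKA] at e <;>
      (obtain ⟨KB, hKB⟩ : ∃ K:ℤ, K = B^2 := ⟨_, rfl⟩) <;>
      rw [← hKB] at e <;> omega
  rw [Int.isCoprime_iff_gcd_eq_one]
  by_contra hg
  have hg0 : Int.gcd (a+b) (2*b) ≠ 0 := by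
    intro h0
    rw [Int.gcd_eq_zero_iff] at h0
    omega
  obtain ⟨e, he, hed⟩ := Nat.exists_prime_and_dvd hg
  have he1 : (e:ℤ) ∣ a+b := dvd_trans (Int.natCast_dvd_natCast.mpr hed) (Int.gcd_dvd_left _ _)
  have he2 : (e:ℤ) ∣ 2*b := dvd_trans (Int.natCast_dvd_natCast.mpr hed) (Int.gcd_dvd_right _ _)
  have heZ : Prime (e:ℤ) := Nat.prime_iff_prime_int.mp he
  have hene2 : e ≠ 2 := by
    rintro rfl
    obtain ⟨w, hw⟩ := he1
    omega
  have heb : (e:ℤ) ∣ b := by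
    rcases heZ.dvd_mul.mp he2 with h' | h'
    · exfalso; apply hene2
      have : e ∣ 2 := by exact_mod_cast h'
      exact (Nat.prime_dvd_prime_iff_eq he Nat.prime_two).mp this
    · exact h'
  have hea : (e:ℤ) ∣ a := by
    have : a = (a+b) - b := by ring
    rw [this]; exact dvd_sub he1 heb
  -- then e^2 ∣ p
  have he2p : (e:ℤ)*(e:ℤ) ∣ (p:ℤ) := by
    obtain ⟨a', ha'⟩ := hea
    obtain ⟨b', hb'⟩ := heb
    exact ⟨a'^2 + 3*b'^2, by rw [h, ha', hb']; ring⟩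
  have he2p' : e*e ∣ p := by exact_mod_cast he2p
  have hee : e ∣ p := dvd_trans ⟨e, rfl⟩ he2p'
  rcases hp.eq_one_or_self_of_dvd e hee with h1 | h1
  · exact he.one_lt.ne' h1
  · have hle := Nat.le_of_dvd hp.pos (h1 ▸ he2p')
    have h2 := hp.two_le
    nlinarith

lemma rep_all : ∀ m : ℕ, 0 < m → (∀ p : ℕ, p.Prime → p ∣ m → p % 3 = 1) →
    ∃ u v : ℤ, IsCoprime u v ∧ (m:ℤ) = u^2 - u*v + v^2 := by
  intro m
  induction m using Nat.strong_induction_on with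
  | _ m ih =>
    intro hm hprimes
    by_cases h1 : m = 1
    · exact ⟨1, 1, isCoprime_one_left, by rw [h1]; norm_num⟩
    · have hp := Nat.minFac_prime h1
      have hpd : m.minFac ∣ m := Nat.minFac_dvd m
      set p := m.minFac with hpdef
      have hp3 := hprimes p hp hpd
      obtain ⟨m', hm'⟩ := hpd
      have hm'pos : 0 < m' := by
        rcases Nat.eq_zero_or_pos m' with h | h
        · rw [h, Nat.mul_zero] at hm'; omega
        · exact h
      have hm'lt : m' < m := by
        have h2 := hp.two_le
        calc m' < 2 * m' := by omega
        _ ≤ p * m' := Nat.mul_le_mul_right m' h2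
        _ = m := hm'.symm
      have hprimes' : ∀ q : ℕ, q.Prime → q ∣ m' → q % 3 = 1 := fun q hq hqd =>
        hprimes q hq (hqd.trans ⟨p, by rw [hm']; ring⟩)
      obtain ⟨s, t, hst, hrep⟩ := ih m' hm'lt hm'pos hprimes'
      obtain ⟨c, d, hcd, hprep⟩ := prime_rep p hp hp3 (exists_sq_add_three_sq p hp hp3)
      obtain ⟨P, Q, hPQ, hPQrep⟩ := compose_prime hp hp3 hcd hst hprep hrep
      refine ⟨P, Q, hPQ, ?_⟩
      rw [hm']
      push_cast
      rw [← hPQrep]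

theorem stmt_12 :
    let A : Set ℤ := {n | ∃ x y : ℤ, Int.gcd x y = 1 ∧ n = 3*x^2 - y^2}
    let B : Set ℤ := {n | ∃ x y : ℤ, Int.gcd x y = 1 ∧ n = x^2 + y^2}
    let C : Set ℤ := {n | ∃ x y : ℤ, Int.gcd x y = 1 ∧ n = 2*(x^2 - x*y + y^2)}
    A ∩ B ⊆ C ∧ ¬ (C ⊆ A ∩ B) := by
  intro A B C
  constructor
  · rintro n ⟨⟨x, y, hxy, hA⟩, ⟨a, b, hab, hB⟩⟩
    have hxyC : IsCoprime x y := Int.isCoprime_iff_gcd_eq_one.mpr hxy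
    have habC : IsCoprime a b := Int.isCoprime_iff_gcd_eq_one.mpr hab
    have hnn : 0 ≤ n := by rw [hB]; positivity
    -- n % 4 from the B side
    have hB4 : n % 4 = 1 ∨ n % 4 = 2 := by
      rcases Int.even_or_odd a with ⟨A', hA'⟩ | ⟨A', hA'⟩ <;>
        rcases Int.even_or_odd b with ⟨B', hB'⟩ | ⟨B', hB'⟩
      · exfalso
        refine Int.prime_two.not_unit (habC.isUnit_of_dvd' ⟨A', by omega⟩ ⟨B', by omega⟩)
      · have e : n = 4*A'^2 + 4*B'^2 + 4*B' + 1 := by rw [hB, hA', hB']; ring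
        obtain ⟨KA, hKA⟩ : ∃ K:ℤ, K = A'^2 := ⟨_, rfl⟩
        obtain ⟨KB, hKB⟩ : ∃ K:ℤ, K = B'^2 := ⟨_, rfl⟩
        rw [← hKA, ← hKB] at e; omega
      · have e : n = 4*A'^2 + 4*A' + 1 + 4*B'^2 := by rw [hB, hA', hB']; ring
        obtain ⟨KA, hKA⟩ : ∃ K:ℤ, K = A'^2 := ⟨_, rfl⟩
        obtain ⟨KB, hKB⟩ : ∃ K:ℤ, K = B'^2 := ⟨_, rfl⟩
        rw [← hKA, ← hKB] at e; omega
      · have e : n = 4*A'^2 + 4*A' + 4*B'^2 + 4*B' + 2 := by rw [hB, hA', hB']; ring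
        obtain ⟨KA, hKA⟩ : ∃ K:ℤ, K = A'^2 := ⟨_, rfl⟩
        obtain ⟨KB, hKB⟩ : ∃ K:ℤ, K = B'^2 := ⟨_, rfl⟩
        rw [← hKA, ← hKB] at e; omega
    -- n % 4 from the A side
    have hA4 : n % 4 = 2 ∨ n % 4 = 3 := by
      rcases Int.even_or_odd x with ⟨X', hX'⟩ | ⟨X', hX'⟩ <;>
        rcases Int.even_or_odd y with ⟨Y', hY'⟩ | ⟨Y', hY'⟩
      · exfalso
        refine Int.prime_two.not_unit (hxyC.isUnit_of_dvd' ⟨X', by omega⟩ ⟨Y', by omega⟩)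
      · have e : n = 12*X'^2 - 4*Y'^2 - 4*Y' - 1 := by rw [hA, hX', hY']; ring
        obtain ⟨KA, hKA⟩ : ∃ K:ℤ, K = X'^2 := ⟨_, rfl⟩
        obtain ⟨KB, hKB⟩ : ∃ K:ℤ, K = Y'^2 := ⟨_, rfl⟩
        rw [← hKA, ← hKB] at e; omega
      · have e : n = 12*X'^2 + 12*X' + 3 - 4*Y'^2 := by rw [hA, hX', hY']; ring
        obtain ⟨KA, hKA⟩ : ∃ K:ℤ, K = X'^2 := ⟨_, rfl⟩
        obtain ⟨KB, hKB⟩ : ∃ K:ℤ, K = Y'^2 := ⟨_, rfl⟩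
        rw [← hKA, ← hKB] at e; omega
      · have e : n = 12*X'^2 + 12*X' - 4*Y'^2 - 4*Y' + 2 := by rw [hA, hX', hY']; ring
        obtain ⟨KA, hKA⟩ : ∃ K:ℤ, K = X'^2 := ⟨_, rfl⟩
        obtain ⟨KB, hKB⟩ : ∃ K:ℤ, K = Y'^2 := ⟨_, rfl⟩
        rw [← hKA, ← hKB] at e; omega
    have hn4 : n % 4 = 2 := by omega
    obtain ⟨m, hm, hmodd, hmpos⟩ : ∃ m : ℤ, n = 2*m ∧ m % 2 = 1 ∧ 0 < m := by
      refine ⟨n/2, by omega, by omega, by omega⟩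
    -- all odd prime divisors q ≠ 3 of m are ≡ 1 mod 3
    have key : ∀ q : ℕ, q.Prime → (q:ℤ) ∣ m → q ≠ 3 → q % 3 = 1 := by
      intro q hq hqm hq3
      have hqZ : Prime (q:ℤ) := Nat.prime_iff_prime_int.mp hq
      have hqn : (q:ℤ) ∣ n := hm ▸ hqm.mul_left 2
      have hq2 : q ≠ 2 := by
        rintro rfl
        obtain ⟨w, hw⟩ := hqm
        omega
      haveI : Fact q.Prime := ⟨hq⟩
      have hn0 : ((n : ℤ) : ZMod q) = 0 := (ZMod.intCast_zmod_eq_zero_iff_dvd n q).mpr hqn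
      -- B side gives sqrt of -1
      have hBz : ((a:ℤ) : ZMod q)^2 + ((b:ℤ) : ZMod q)^2 = 0 := by
        rw [hB] at hn0; push_cast at hn0; linear_combination hn0
      have hqa : ((a:ℤ) : ZMod q) ≠ 0 := by
        intro h0
        have hqa' : (q:ℤ) ∣ a := (ZMod.intCast_zmod_eq_zero_iff_dvd a q).mp h0
        have hqb2 : (q:ℤ) ∣ b^2 := by
          have : b^2 = n - a^2 := by rw [hB]; ring
          rw [this]
          exact dvd_sub hqn (dvd_pow hqa' (by norm_num))
        have hqb : (q:ℤ) ∣ b := hqZ.dvd_of_dvd_pow hqb2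
        exact hqZ.not_unit (habC.isUnit_of_dvd' hqa' hqb)
      -- A side gives sqrt of 3
      have hAz : 3*((x:ℤ) : ZMod q)^2 - ((y:ℤ) : ZMod q)^2 = 0 := by
        rw [hA] at hn0; push_cast at hn0; linear_combination hn0
      have hqx : ((x:ℤ) : ZMod q) ≠ 0 := by
        intro h0
        have hqx' : (q:ℤ) ∣ x := (ZMod.intCast_zmod_eq_zero_iff_dvd x q).mp h0
        have hqy2 : (q:ℤ) ∣ y^2 := by
          have : y^2 = 3*x^2 - n := by rw [hA]; ring
          rw [this]
          exact dvd_sub ((dvd_pow hqx' (by norm_num)).mul_left 3) hqn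
        have hqy : (q:ℤ) ∣ y := hqZ.dvd_of_dvd_pow hqy2
        exact hqZ.not_unit (hxyC.isUnit_of_dvd' hqx' hqy)
      refine mod_three_of_sq_neg_three q hq hq2 hq3
        (((b:ℤ):ZMod q) * ((a:ℤ):ZMod q)⁻¹ * (((y:ℤ):ZMod q) * ((x:ℤ):ZMod q)⁻¹)) ?_
      have hb2 : ((b:ℤ):ZMod q)^2 = -((a:ℤ):ZMod q)^2 := by linear_combination hBz
      have hy2 : ((y:ℤ):ZMod q)^2 = 3*((x:ℤ):ZMod q)^2 := by linear_combination -hAz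
      field_simp
      linear_combination (((y:ℤ):ZMod q))^2 * hb2 - ((((a:ℤ):ZMod q))^2) * hy2
    -- no 9 divides n
    have hn9 : ¬ (9:ℤ) ∣ n := by
      intro h9
      have h3n : (3:ℤ) ∣ n := dvd_trans ⟨3, by norm_num⟩ h9
      have h3y2 : (3:ℤ) ∣ y^2 := by
        have : y^2 = 3*x^2 - n := by rw [hA]; ring
        rw [this]
        exact dvd_sub (Dvd.intro _ rfl) h3n
      have h3y : (3:ℤ) ∣ y := Int.prime_three.dvd_of_dvd_pow h3y2
      obtain ⟨y1, hy1⟩ := h3y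
      have h3x2 : (3:ℤ) ∣ x^2 := by
        obtain ⟨w, hw⟩ := h9
        have h1 : n = 3*x^2 - 9*y1^2 := by rw [hA, hy1]; ring
        exact ⟨w + y1^2, by linarith⟩
      have h3x : (3:ℤ) ∣ x := Int.prime_three.dvd_of_dvd_pow h3x2
      exact Int.prime_three.not_unit (hxyC.isUnit_of_dvd' h3x (hy1 ▸ Dvd.intro _ rfl))
    by_cases h3 : (3:ℤ) ∣ m
    · -- m = 3 * m₀
      obtain ⟨m0, hm0⟩ := h3
      have hm0pos : 0 < m0 := by nlinarith
      have h3m0 : ¬ (3:ℤ) ∣ m0 := by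
        rintro ⟨w, hw⟩
        exact hn9 ⟨2*w, by rw [hm, hm0, hw]; ring⟩
      have hm0M : ((m0.toNat : ℤ)) = m0 := Int.toNat_of_nonneg (by omega)
      have hcond : ∀ q : ℕ, q.Prime → q ∣ m0.toNat → q % 3 = 1 := by
        intro q hq hqd
        have hq3 : q ≠ 3 := by
          rintro rfl
          exact h3m0 (by exact_mod_cast hm0M ▸ Int.natCast_dvd_natCast.mpr hqd)
        refine key q hq ?_ hq3
        rw [hm0]
        exact Dvd.dvd.mul_left (hm0M ▸ Int.natCast_dvd_natCast.mpr hqd) 3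
      obtain ⟨s, t, hst, hrep⟩ := rep_all m0.toNat (by omega) hcond
      obtain ⟨P, Q, hPQ, hPQrep⟩ := compose_coprime (M := 3) (N := m0)
        (isCoprime_one_left (x := (-1:ℤ))) hst
        ((Int.prime_three.coprime_iff_not_dvd).mpr h3m0)
        (by norm_num) (by rw [← hm0M]; exact hrep)
      refine ⟨P, Q, Int.isCoprime_iff_gcd_eq_one.mp hPQ, ?_⟩
      rw [hm, hm0, ← hPQrep]
    · have hmM : ((m.toNat : ℤ)) = m := Int.toNat_of_nonneg (by omega)
      have hcond : ∀ q : ℕ, q.Prime → q ∣ m.toNat → q % 3 = 1 := by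
        intro q hq hqd
        have hqm : (q:ℤ) ∣ m := hmM ▸ Int.natCast_dvd_natCast.mpr hqd
        have hq3 : q ≠ 3 := by rintro rfl; exact h3 hqm
        exact key q hq hqm hq3
      obtain ⟨u, v, huv, hrep⟩ := rep_all m.toNat (by omega) hcond
      refine ⟨u, v, Int.isCoprime_iff_gcd_eq_one.mp huv, ?_⟩
      rw [hm, ← hmM, hrep]
  · intro h
    have h6C : (6:ℤ) ∈ C := ⟨2, 1, by norm_num, by norm_num⟩
    obtain ⟨a, b, -, h6⟩ := (h h6C).2
    have hz : ∀ u v : ZMod 8, u^2 + v^2 ≠ 6 := by decide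
    apply hz ((a:ℤ) : ZMod 8) ((b:ℤ) : ZMod 8)
    have := congrArg (fun z : ℤ => (z : ZMod 8)) h6
    push_cast at this
    exact this.symm
end

section
/- Let 𝒜 = {n : ℤ | ∃ x y : ℤ, gcd(x, y) = 1 ∧ n = 3x² − y²}, ℬ = {n : ℤ | ∃ x y : ℤ, gcd(x, y) = 1 ∧ n = x² + y²}, and 𝒞 = {n : ℤ | ∃ x y : ℤ, gcd(x, y) = 1 ∧ n = 2(x² − xy + y²)}. Then ℬ ∩ 𝒞 is a proper subset of 𝒜, i.e., ℬ ∩ 𝒞 ⊆ 𝒜 and 𝒜 ⊄ ℬ ∩ 𝒞. -/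
lemma my_thue (p : ℕ) (hp : p.Prime) (r : ℤ) :
    ∃ e f : ℤ, (p : ℤ) ∣ (e - r * f) ∧ e^2 < p ∧ f^2 < p ∧ ¬(e = 0 ∧ f = 0) := by
  haveI : Fact p.Prime := ⟨hp⟩
  set s := Nat.sqrt p with hs
  have hsq : s * s < p := by
    rcases Nat.lt_or_ge (s*s) p with h | h
    · exact h
    · exfalso
      have h1 : s * s = p := le_antisymm (Nat.sqrt_le p) h
      have : s ∣ p := ⟨s, h1.symm⟩
      rcases (Nat.Prime.eq_one_or_self_of_dvd hp s this) with h2 | h2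
      · rw [h2] at h1; simp at h1; exact hp.ne_one h1.symm
      · have := hp.two_le; nlinarith
  have hcard : Fintype.card (ZMod p) < Fintype.card (Fin (s+1) × Fin (s+1)) := by
    simp [ZMod.card]
    calc p < (s+1) * (s+1) := Nat.lt_succ_sqrt p
    _ = _ := by ring
  obtain ⟨a, b, hab, heq⟩ := Fintype.exists_ne_map_eq_of_card_lt
    (fun x : Fin (s+1) × Fin (s+1) => ((x.1.val : ZMod p) - r * (x.2.val : ZMod p))) hcard
  refine ⟨(a.1.val : ℤ) - b.1.val, (a.2.val : ℤ) - b.2.val, ?_, ?_, ?_, ?_⟩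
  · rw [← ZMod.intCast_zmod_eq_zero_iff_dvd]
    push_cast
    linear_combination heq
  · have h1 : (a.1.val : ℤ) ≤ s := by exact_mod_cast Nat.lt_succ_iff.mp a.1.isLt
    have h2 : (b.1.val : ℤ) ≤ s := by exact_mod_cast Nat.lt_succ_iff.mp b.1.isLt
    have : ((a.1.val : ℤ) - b.1.val)^2 ≤ (s:ℤ)^2 := by
      apply sq_le_sq' <;> omega
    have : ((s:ℤ))^2 < p := by exact_mod_cast (by nlinarith : s^2 < p)
    nlinarith [((a.1.val : ℤ) - b.1.val)^2, this]
  · have h1 : (a.2.val : ℤ) ≤ s := by exact_mod_cast Nat.lt_succ_iff.mp a.2.isLt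
    have h2 : (b.2.val : ℤ) ≤ s := by exact_mod_cast Nat.lt_succ_iff.mp b.2.isLt
    have h3 : ((a.2.val : ℤ) - b.2.val)^2 ≤ (s:ℤ)^2 := by
      apply sq_le_sq' <;> omega
    have h4 : ((s:ℤ))^2 < p := by exact_mod_cast (by nlinarith : s^2 < p)
    nlinarith
  · rintro ⟨h1, h2⟩
    apply hab
    have e1 : a.1 = b.1 := by
      apply Fin.ext; omega
    have e2 : a.2 = b.2 := by
      apply Fin.ext; omega
    exact Prod.ext e1 e2


lemma my_sq_eq_three_sq (a : ℕ) : ∀ b : ℕ, a^2 = 3*b^2 → a = 0 ∧ b = 0 := by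
  induction a using Nat.strong_induction_on with
  | _ a ih =>
    intro b h
    rcases Nat.eq_zero_or_pos a with ha | ha
    · constructor
      · exact ha
      · subst ha; simpa using h.symm
    · exfalso
      have h3 : 3 ∣ a := by
        have : (3:ℕ).Prime := by norm_num
        have : 3 ∣ a * a := by
          have : 3 ∣ a^2 := ⟨b^2, h⟩
          simpa [pow_two] using this
        exact (Nat.Prime.dvd_mul (by norm_num)).mp this |>.elim id id
      obtain ⟨a', rfl⟩ := h3
      have hb : b^2 = 3*a'^2 := by ring_nf at h ⊢; omega
      have h3b : 3 ∣ b := by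
        have : 3 ∣ b * b := by
          have : 3 ∣ b^2 := ⟨a'^2, hb⟩
          simpa [pow_two] using this
        exact (Nat.Prime.dvd_mul (by norm_num)).mp this |>.elim id id
      obtain ⟨b', rfl⟩ := h3b
      have ha' : a'^2 = 3*b'^2 := by ring_nf at hb ⊢; omega
      have : a' < 3 * a' := by omega
      have := ih a' this b' ha'
      omega

lemma my_int_sq_eq_three_sq (e f : ℤ) (h : e^2 = 3*f^2) : e = 0 ∧ f = 0 := by
  have h1 : e.natAbs^2 = 3 * f.natAbs^2 := by
    have := congrArg Int.natAbs h
    simpa [Int.natAbs_mul, Int.natAbs_pow] using this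
  have := my_sq_eq_three_sq e.natAbs f.natAbs h1
  omega

lemma my_prime_rep (p : ℕ) (hp : p.Prime) (h12 : p % 12 = 1) :
    ∃ e f : ℤ, (p : ℤ) = e^2 - 3*f^2 := by
  haveI : Fact p.Prime := ⟨hp⟩
  haveI : Fact (Nat.Prime 3) := ⟨by norm_num⟩
  -- 3 is a square mod p
  have hp4 : p % 4 = 1 := by omega
  have hp3 : p % 3 = 1 := by omega
  have hsq3 : IsSquare (3 : ZMod p) := by
    have := ZMod.exists_sq_eq_prime_iff_of_mod_four_eq_one (p := p) (q := 3) hp4 (by norm_num)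
    rw [show ((3:ℕ):ZMod p) = (3:ZMod p) by push_cast; ring] at this
    rw [this]
    have : (p : ZMod 3) = 1 := by
      rw [← ZMod.natCast_mod p 3, hp3]
      norm_num
    rw [this]
    exact IsSquare.one
  obtain ⟨z, hz⟩ := hsq3
  -- t : ℤ with t^2 ≡ 3 mod p
  set t : ℤ := (z.val : ℤ) with ht
  have htmod : (p:ℤ) ∣ t^2 - 3 := by
    rw [← ZMod.intCast_zmod_eq_zero_iff_dvd]
    have : ((t : ZMod p)) = z := by
      rw [ht]
      push_cast
      simp [ZMod.natCast_val, ZMod.cast_id]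
    push_cast
    rw [this, hz]
    ring
  obtain ⟨e, f, hdvd, he, hf, hnz⟩ := my_thue p hp t
  have hdvd2 : (p:ℤ) ∣ e^2 - 3*f^2 := by
    obtain ⟨k, hk⟩ := hdvd
    obtain ⟨l, hl⟩ := htmod
    refine ⟨k*(e + t*f) + l*f^2, ?_⟩
    linear_combination (e + t*f) * hk + f^2 * hl
  obtain ⟨K, hK⟩ := hdvd2
  have hppos : (0:ℤ) < p := by exact_mod_cast hp.pos
  have h1 : K < 1 := by nlinarith [sq_nonneg f, sq_nonneg e]
  have h2 : -3 < K := by nlinarith [sq_nonneg e]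
  have hp12 : ((p:ℕ) : ZMod 12) = 1 := by
    rw [← ZMod.natCast_mod p 12, h12]
    norm_num
  rcases (by omega : K = 0 ∨ K = -1 ∨ K = -2) with h|h|h
  · exfalso
    subst h
    simp at hK
    have := my_int_sq_eq_three_sq e f (by linarith)
    exact hnz this
  · exfalso
    subst h
    have hcast : ((e:ZMod 12))^2 - 3*(f:ZMod 12)^2 + 1 = 0 := by
      have := congrArg (Int.cast : ℤ → ZMod 12) hK
      push_cast at this
      rw [hp12] at this
      linear_combination this
    have hall : ∀ u v : ZMod 12, u^2 - 3*v^2 + 1 ≠ 0 := by decide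
    exact hall _ _ hcast
  · subst h
    set u : ℤ := e + 3*f with hu
    set v : ℤ := e + f with hv
    have huv : u^2 - 3*v^2 = 4*p := by
      rw [hu, hv]; linear_combination (-2 : ℤ) * hK
    rcases Int.even_or_odd u with ⟨k, hk⟩ | ⟨k, hk⟩
    · have hveven : ∃ l, v = 2*l := by
        refine ⟨k - f, ?_⟩
        rw [hv]
        omega
      obtain ⟨l, hl⟩ := hveven
      refine ⟨k, l, ?_⟩
      rw [hk, hl] at huv
      linarith [huv]
    · exfalso
      have hvodd : ∃ l, v = 2*l + 1 := by
        refine ⟨k - f, ?_⟩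
        rw [hv]
        omega
      obtain ⟨l, hl⟩ := hvodd
      rw [hk, hl] at huv
      have key : 4*(k^2 + k - 3*l^2 - 3*l) - 2 = 4*(p:ℤ) := by linear_combination huv
      have h4 : (4:ℤ) ∣ 4*(p:ℤ) := ⟨p, rfl⟩
      rw [← key] at h4
      omega


lemma my_L : ∀ M : ℕ, 0 < M → (∀ p : ℕ, p.Prime → p ∣ M → p % 12 = 1) →
    ∃ X Y : ℤ, Int.gcd X Y = 1 ∧ 2 * (M:ℤ) = 3*X^2 - Y^2 := by
  intro M
  induction M using Nat.strong_induction_on with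
  | _ M ih =>
    intro hM hprimes
    rcases eq_or_ne M 1 with h1 | h1
    · subst h1
      exact ⟨1, 1, by norm_num, by norm_num⟩
    · obtain ⟨p, hp, hpd⟩ := Nat.exists_prime_and_dvd h1
      have hp12 := hprimes p hp hpd
      have hp13 : 13 ≤ p := by have := hp.two_le; omega
      obtain ⟨m', hm'⟩ := hpd
      have hm'pos : 0 < m' := by
        rcases Nat.eq_zero_or_pos m' with h | h
        · subst h; simp at hm'; omega
        · exact h
      have hm'lt : m' < M := by
        have : 2 * m' ≤ p * m' := Nat.mul_le_mul_right m' hp.two_le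
        omega
      obtain ⟨X, Y, hXY, hrep⟩ := ih m' hm'lt hm'pos
        (fun q hq hqd => hprimes q hq (hqd.trans ⟨p, by rw [hm']; ring⟩))
      obtain ⟨e, f, hef⟩ := my_prime_rep p hp hp12
      have hMc : (M:ℤ) = (p:ℤ) * (m':ℤ) := by exact_mod_cast congrArg (Nat.cast : ℕ → ℤ) hm'
      have hpint : Prime (p:ℤ) := Nat.prime_iff_prime_int.mp hp
      have hpdvd1 : ¬ ((p:ℤ) ∣ 1) := by
        intro h
        have := Int.le_of_dvd one_pos h
        omega
      have hpn3 : ¬ ((p:ℤ) ∣ 3) := by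
        intro h
        have := Int.le_of_dvd (by norm_num) h
        omega
      have hpn2 : ¬ ((p:ℤ) ∣ 2) := by
        intro h
        have := Int.le_of_dvd (by norm_num) h
        omega
      have hpef : ¬ ((p:ℤ) ∣ e ∧ (p:ℤ) ∣ f) := by
        rintro ⟨⟨e', rfl⟩, ⟨f', rfl⟩⟩
        apply hpdvd1
        have hp0 : (p:ℤ) ≠ 0 := by exact_mod_cast hp.ne_zero
        have hcc : (p:ℤ) * 1 = (p:ℤ) * ((p:ℤ)*(e'^2 - 3*f'^2)) := by linear_combination hef
        have h1 := mul_left_cancel₀ hp0 hcc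
        exact ⟨e'^2 - 3*f'^2, h1⟩
      have hpe : ¬ ((p:ℤ) ∣ e) := by
        intro he
        apply hpef
        refine ⟨he, ?_⟩
        have h3f : (p:ℤ) ∣ 3 * f^2 := by
          have heq : 3*f^2 = e^2 - (p:ℤ) := by linear_combination hef
          rw [heq]
          exact dvd_sub (Dvd.dvd.pow he (by norm_num)) dvd_rfl
        rcases hpint.dvd_mul.mp h3f with h | h
        · exact absurd h hpn3
        · exact hpint.dvd_of_dvd_pow h
      have hpf : ¬ ((p:ℤ) ∣ f) := by
        intro hf
        apply hpef
        refine ⟨?_, hf⟩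
        have h3e : (p:ℤ) ∣ e^2 := by
          have heq : e^2 = (p:ℤ) + 3*f^2 := by linear_combination -hef
          rw [heq]
          exact dvd_add dvd_rfl (Dvd.dvd.mul_left (Dvd.dvd.pow hf (by norm_num)) 3)
        exact hpint.dvd_of_dvd_pow h3e
      have key : ∀ s : ℤ, s^2 = 1 → 2*(M:ℤ) = 3*(X*e+s*(Y*f))^2 - (Y*e+s*(3*X*f))^2 := by
        intro s hs
        linear_combination 2*hMc + 2*(m':ℤ)*hef + (e^2-3*f^2)*hrep + (9*X^2*f^2-3*Y^2*f^2)*hs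
      by_cases hg1 : Int.gcd (X*e+Y*f) (Y*e+3*X*f) = 1
      · refine ⟨X*e+Y*f, Y*e+3*X*f, hg1, ?_⟩
        have := key 1 (by norm_num)
        linear_combination this
      by_cases hg2 : Int.gcd (X*e-Y*f) (Y*e-3*X*f) = 1
      · refine ⟨X*e-Y*f, Y*e-3*X*f, hg2, ?_⟩
        have := key (-1) (by norm_num)
        linear_combination this
      exfalso
      obtain ⟨q₁, hq₁, hq₁d⟩ := Nat.exists_prime_and_dvd hg1
      obtain ⟨q₂, hq₂, hq₂d⟩ := Nat.exists_prime_and_dvd hg2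
      have ha1 : (q₁:ℤ) ∣ X*e+Y*f :=
        dvd_trans (Int.natCast_dvd_natCast.mpr hq₁d) (Int.gcd_dvd_left _ _)
      have ha2 : (q₁:ℤ) ∣ Y*e+3*X*f :=
        dvd_trans (Int.natCast_dvd_natCast.mpr hq₁d) (Int.gcd_dvd_right _ _)
      have hb1 : (q₂:ℤ) ∣ X*e-Y*f :=
        dvd_trans (Int.natCast_dvd_natCast.mpr hq₂d) (Int.gcd_dvd_left _ _)
      have hb2 : (q₂:ℤ) ∣ Y*e-3*X*f :=
        dvd_trans (Int.natCast_dvd_natCast.mpr hq₂d) (Int.gcd_dvd_right _ _)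
      -- each q divides X*p and Y*p, hence q = p
      have hXY1 : ¬ ((q₁:ℤ) ∣ X ∧ (q₁:ℤ) ∣ Y) := by
        rintro ⟨hx, hy⟩
        have : (q₁:ℤ) ∣ (Int.gcd X Y : ℤ) := Int.dvd_coe_gcd hx hy
        rw [hXY] at this
        have := Int.le_of_dvd one_pos this
        have := hq₁.two_le
        omega
      have hXY2 : ¬ ((q₂:ℤ) ∣ X ∧ (q₂:ℤ) ∣ Y) := by
        rintro ⟨hx, hy⟩
        have : (q₂:ℤ) ∣ (Int.gcd X Y : ℤ) := Int.dvd_coe_gcd hx hy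
        rw [hXY] at this
        have := Int.le_of_dvd one_pos this
        have := hq₂.two_le
        omega
      have hq₁p : q₁ = p := by
        have hXp : (q₁:ℤ) ∣ X*(p:ℤ) := by
          have heq : X*(p:ℤ) = e*(X*e+Y*f) - f*(Y*e+3*X*f) := by linear_combination X*hef
          rw [heq]
          exact dvd_sub (ha1.mul_left e) (ha2.mul_left f)
        have hYp : (q₁:ℤ) ∣ Y*(p:ℤ) := by
          have heq : Y*(p:ℤ) = e*(Y*e+3*X*f) - 3*f*(X*e+Y*f) := by linear_combination Y*hef
          rw [heq]
          exact dvd_sub (ha2.mul_left e) (ha1.mul_left (3*f))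
        have hq₁int : Prime (q₁:ℤ) := Nat.prime_iff_prime_int.mp hq₁
        by_cases hqp : (q₁:ℤ) ∣ (p:ℤ)
        · exact (Nat.prime_dvd_prime_iff_eq hq₁ hp).mp (Int.natCast_dvd_natCast.mp hqp)
        · exfalso
          apply hXY1
          constructor
          · rcases hq₁int.dvd_mul.mp hXp with h | h
            · exact h
            · exact absurd h hqp
          · rcases hq₁int.dvd_mul.mp hYp with h | h
            · exact h
            · exact absurd h hqp
      have hq₂p : q₂ = p := by
        have hXp : (q₂:ℤ) ∣ X*(p:ℤ) := by
          have heq : X*(p:ℤ) = e*(X*e-Y*f) + f*(Y*e-3*X*f) := by linear_combination X*hef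
          rw [heq]
          exact dvd_add (hb1.mul_left e) (hb2.mul_left f)
        have hYp : (q₂:ℤ) ∣ Y*(p:ℤ) := by
          have heq : Y*(p:ℤ) = e*(Y*e-3*X*f) + 3*f*(X*e-Y*f) := by linear_combination Y*hef
          rw [heq]
          exact dvd_add (hb2.mul_left e) (hb1.mul_left (3*f))
        have hq₂int : Prime (q₂:ℤ) := Nat.prime_iff_prime_int.mp hq₂
        by_cases hqp : (q₂:ℤ) ∣ (p:ℤ)
        · exact (Nat.prime_dvd_prime_iff_eq hq₂ hp).mp (Int.natCast_dvd_natCast.mp hqp)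
        · exfalso
          apply hXY2
          constructor
          · rcases hq₂int.dvd_mul.mp hXp with h | h
            · exact h
            · exact absurd h hqp
          · rcases hq₂int.dvd_mul.mp hYp with h | h
            · exact h
            · exact absurd h hqp
      rw [hq₁p] at ha1 ha2
      rw [hq₂p] at hb1 hb2
      rw [hq₁p] at hXY1
      -- now p divides both components of both pairs
      have hX2e : (p:ℤ) ∣ 2*(X*e) := by
        have heq : 2*(X*e) = (X*e+Y*f) + (X*e-Y*f) := by ring
        rw [heq]; exact dvd_add ha1 hb1
      have hY2e : (p:ℤ) ∣ 2*(Y*e) := by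
        have heq : 2*(Y*e) = (Y*e+3*X*f) + (Y*e-3*X*f) := by ring
        rw [heq]; exact dvd_add ha2 hb2
      apply hXY1
      constructor
      · rcases hpint.dvd_mul.mp hX2e with h | h
        · exact absurd h hpn2
        · rcases hpint.dvd_mul.mp h with h' | h'
          · exact h'
          · exact absurd h' hpe
      · rcases hpint.dvd_mul.mp hY2e with h | h
        · exact absurd h hpn2
        · rcases hpint.dvd_mul.mp h with h' | h'
          · exact h'
          · exact absurd h' hpe


theorem stmt_13 :
    let A : Set ℤ := {n | ∃ x y : ℤ, Int.gcd x y = 1 ∧ n = 3*x^2 - y^2}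
    let B : Set ℤ := {n | ∃ x y : ℤ, Int.gcd x y = 1 ∧ n = x^2 + y^2}
    let C : Set ℤ := {n | ∃ x y : ℤ, Int.gcd x y = 1 ∧ n = 2*(x^2 - x*y + y^2)}
    B ∩ C ⊆ A ∧ ¬ (A ⊆ B ∩ C) := by
  intro A B C
  constructor
  · rintro n ⟨⟨a, b, hab, hn1⟩, ⟨c, d, hcd, hn2⟩⟩
    set m : ℤ := c^2 - c*d + d^2 with hm
    have h4m : 4*m = (2*c-d)^2 + 3*d^2 := by ring
    have hmpos : 0 < m := by
      rcases lt_or_ge 0 m with h | h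
      · exact h
      · exfalso
        have hd : d = 0 := by nlinarith [sq_nonneg (2*c-d), sq_nonneg d]
        have hc : c = 0 := by nlinarith [sq_nonneg (2*c-d)]
        rw [hc, hd] at hcd
        simp at hcd
    have hmodd : ¬ ((2:ℤ) ∣ m) := by
      intro h2
      have hcd2 : ¬ ((2:ℤ) ∣ c ∧ (2:ℤ) ∣ d) := by
        rintro ⟨h1, h2'⟩
        have : (2:ℤ) ∣ (Int.gcd c d : ℤ) := Int.dvd_coe_gcd h1 h2'
        rw [hcd] at this
        norm_num at this
      have hc2 : ((c : ZMod 2))^2 - (c:ZMod 2)*(d:ZMod 2) + (d:ZMod 2)^2 = 0 := by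
        have : ((m : ℤ) : ZMod 2) = 0 := by
          rw [ZMod.intCast_zmod_eq_zero_iff_dvd]
          exact_mod_cast h2
        rw [hm] at this
        push_cast at this
        linear_combination this
      have key : ∀ u v : ZMod 2, u^2 - u*v + v^2 = 0 → (u = 0 ∧ v = 0) := by decide
      obtain ⟨hu, hv⟩ := key _ _ hc2
      apply hcd2
      constructor
      · have := (ZMod.intCast_zmod_eq_zero_iff_dvd c 2).mpr
        exact_mod_cast (ZMod.intCast_zmod_eq_zero_iff_dvd c 2).mp hu
      · exact_mod_cast (ZMod.intCast_zmod_eq_zero_iff_dvd d 2).mp hv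
    set M : ℕ := m.toNat with hM
    have hMm : (M : ℤ) = m := Int.toNat_of_nonneg hmpos.le
    have hprimes : ∀ p : ℕ, p.Prime → p ∣ M → p % 12 = 1 := by
      intro p hp hpM
      haveI : Fact p.Prime := ⟨hp⟩
      have hpm : (p:ℤ) ∣ m := by
        rw [← hMm]
        exact_mod_cast Int.natCast_dvd_natCast.mpr hpM
      have hp2 : p ≠ 2 := by
        rintro rfl
        exact hmodd (by exact_mod_cast hpm)
      have hpodd : p % 2 = 1 := hp.eq_two_or_odd.resolve_left hp2
      have hp2' : ¬ ((p:ℤ) ∣ 2) := by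
        intro h
        have h2 := Int.le_of_dvd (by norm_num) h
        have := hp.two_le
        omega
      have hpint : Prime (p:ℤ) := Nat.prime_iff_prime_int.mp hp
      have hpn : (p:ℤ) ∣ a^2 + b^2 := by
        have : a^2 + b^2 = 2*m := by rw [← hn1, hn2]
        rw [this]
        exact hpm.mul_left 2
      -- p does not divide b
      have hpb : ¬ ((p:ℤ) ∣ b) := by
        intro hb
        have hpa : (p:ℤ) ∣ a := by
          have : (p:ℤ) ∣ a^2 := by
            have heq : a^2 = (a^2+b^2) - b^2 := by ring
            rw [heq]
            exact dvd_sub hpn (Dvd.dvd.pow hb (by norm_num))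
          exact hpint.dvd_of_dvd_pow this
        have : (p:ℤ) ∣ (Int.gcd a b : ℤ) := Int.dvd_coe_gcd hpa hb
        rw [hab] at this
        have := Int.le_of_dvd one_pos this
        have := hp.two_le
        omega
      have hsqneg1 : IsSquare (-1 : ZMod p) := by
        have hb0 : (b : ZMod p) ≠ 0 := by
          rw [Ne, ZMod.intCast_zmod_eq_zero_iff_dvd]
          exact hpb
        have hsum : (a : ZMod p)^2 + (b : ZMod p)^2 = 0 := by
          have : ((a^2 + b^2 : ℤ) : ZMod p) = 0 := (ZMod.intCast_zmod_eq_zero_iff_dvd _ p).mpr hpn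
          push_cast at this
          linear_combination this
        refine ⟨(a : ZMod p) * (b : ZMod p)⁻¹, ?_⟩
        field_simp
        linear_combination -hsum
      have hp4 : p % 4 = 1 := by
        have := ZMod.exists_sq_eq_neg_one_iff.mp hsqneg1
        omega
      -- p does not divide d
      have hpd : ¬ ((p:ℤ) ∣ d) := by
        intro hd
        have hpc : (p:ℤ) ∣ c := by
          have h2cd : (p:ℤ) ∣ (2*c - d)^2 := by
            have heq : (2*c-d)^2 = 4*m - 3*d^2 := by linear_combination h4m
            rw [heq]
            exact dvd_sub (hpm.mul_left 4) ((Dvd.dvd.pow hd (by norm_num)).mul_left 3)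
          have h2cd' : (p:ℤ) ∣ 2*c - d := hpint.dvd_of_dvd_pow h2cd
          have h2c : (p:ℤ) ∣ 2*c := by
            have heq : 2*c = (2*c-d) + d := by ring
            rw [heq]
            exact dvd_add h2cd' hd
          rcases hpint.dvd_mul.mp h2c with h | h
          · exact absurd h hp2'
          · exact h
        have : (p:ℤ) ∣ (Int.gcd c d : ℤ) := Int.dvd_coe_gcd hpc hd
        rw [hcd] at this
        have := Int.le_of_dvd one_pos this
        have := hp.two_le
        omega
      have hsqneg3 : IsSquare (-3 : ZMod p) := by
        have hd0 : (d : ZMod p) ≠ 0 := by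
          rw [Ne, ZMod.intCast_zmod_eq_zero_iff_dvd]
          exact hpd
        have hsum : (2*(c : ZMod p) - (d : ZMod p))^2 + 3*(d : ZMod p)^2 = 0 := by
          have hdd : (p:ℤ) ∣ (2*c-d)^2 + 3*d^2 := by
            have heq : (2*c-d)^2 + 3*d^2 = 4*m := by linear_combination -h4m
            rw [heq]
            exact hpm.mul_left 4
          have : (((2*c-d)^2 + 3*d^2 : ℤ) : ZMod p) = 0 := (ZMod.intCast_zmod_eq_zero_iff_dvd _ p).mpr hdd
          push_cast at this ⊢
          linear_combination this
        refine ⟨(2*(c : ZMod p) - (d : ZMod p)) * (d : ZMod p)⁻¹, ?_⟩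
        field_simp
        linear_combination -hsum
      have hsq3 : IsSquare (3 : ZMod p) := by
        obtain ⟨r, hr⟩ := hsqneg1
        obtain ⟨s, hs⟩ := hsqneg3
        refine ⟨r*s, ?_⟩
        have : (3 : ZMod p) = (-1) * (-3) := by ring
        rw [this, hr, hs]
        ring
      have hp3 : p ≠ 3 := by omega
      have h2sq : ¬ IsSquare ((2:ℕ) : ZMod 3) := by decide
      haveI : Fact (Nat.Prime 3) := ⟨by norm_num⟩
      have hrec := ZMod.exists_sq_eq_prime_iff_of_mod_four_eq_one (p := p) (q := 3) hp4 (by norm_num)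
      rw [show ((3:ℕ):ZMod p) = (3:ZMod p) by push_cast; ring] at hrec
      have hsqp : IsSquare ((p:ℕ) : ZMod 3) := hrec.mp hsq3
      have hpmod3 : p % 3 = 1 := by
        have h0 : p % 3 ≠ 0 := by
          intro h
          have : (3:ℕ) ∣ p := Nat.dvd_of_mod_eq_zero h
          rcases (Nat.Prime.eq_one_or_self_of_dvd hp 3 this) with h' | h' <;> omega
        rcases (by omega : p % 3 = 1 ∨ p % 3 = 2) with h | h
        · exact h
        · exfalso
          rw [← ZMod.natCast_mod p 3, h] at hsqp
          revert hsqp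
          exact h2sq
      omega
    have hMpos : 0 < M := by omega
    obtain ⟨X, Y, hXYg, hXYr⟩ := my_L M hMpos hprimes
    refine ⟨X, Y, hXYg, ?_⟩
    rw [hn2]
    rw [← hXYr, hMm]
  · intro hsub
    have hA : (-1 : ℤ) ∈ A := ⟨0, 1, by norm_num, by norm_num⟩
    obtain ⟨⟨x, y, hxy, hx⟩, -⟩ := hsub hA
    nlinarith [sq_nonneg x, sq_nonneg y]
end

section
/- Let 𝒜 = {n : ℤ | ∃ x y : ℤ, gcd(x, y) = 1 ∧ n = 3x² − y²}, ℬ = {n : ℤ | ∃ x y : ℤ, gcd(x, y) = 1 ∧ n = x² + y²}, and 𝒞 = {n : ℤ | ∃ x y : ℤ, gcd(x, y) = 1 ∧ n = 2(x² − xy + y²)}. Then 𝒞 ∩ 𝒜 is a proper subset of ℬ, i.e., 𝒞 ∩ 𝒜 ⊆ ℬ and ℬ ⊄ 𝒞 ∩ 𝒜. -/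
open Zsqrtd

local notation "ℤi" => GaussianInt

/-- An odd positive integer `m` such that `-1` is a square mod `m` is a sum of two
coprime squares. Proved via gcd's in the Gaussian integers. -/
lemma primitive_sum_sq {m s : ℤ} (hm : 0 < m) (hodd : ¬ (2:ℤ) ∣ m) (hs : m ∣ s^2 + 1) :
    ∃ a b : ℤ, IsCoprime a b ∧ a^2 + b^2 = m := by
  classical
  obtain ⟨k, hk⟩ := hs
  set w : ℤi := ⟨s, 1⟩ with hw
  set d : ℤi := EuclideanDomain.gcd (m : ℤi) w with hd
  have hd1 : d ∣ (m : ℤi) := EuclideanDomain.gcd_dvd_left _ _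
  have hd2 : d ∣ w := EuclideanDomain.gcd_dvd_right _ _
  set α := EuclideanDomain.gcdA (m : ℤi) w with hα
  set β := EuclideanDomain.gcdB (m : ℤi) w with hβ
  have hBez : d = (m : ℤi) * α + w * β := EuclideanDomain.gcd_eq_gcd_ab _ _
  have hstar : star d = (m : ℤi) * star α + star w * star β := by
    rw [hBez, star_add, star_mul, star_mul, star_intCast]; ring
  have hstard : ∀ {u v : ℤi}, u ∣ v → star u ∣ star v := fun h => by
    exact map_dvd (starRingEnd ℤi) h
  have hwconj : w * star w = ((s^2 + 1 : ℤ) : ℤi) := by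
    ext <;> simp only [hw, Zsqrtd.re_mul, Zsqrtd.im_mul, Zsqrtd.re_star, Zsqrtd.im_star,
      Zsqrtd.re_intCast, Zsqrtd.im_intCast] <;> ring
  have hkc : ((s^2 + 1 : ℤ) : ℤi) = (m : ℤi) * (k : ℤi) := by
    rw [← Int.cast_mul, hk]
  have key : d * star d =
      (m : ℤi) * ((m:ℤi) * (α * star α) + α * (star w * star β) + w * (β * star α)
        + (k:ℤi) * (β * star β)) := by
    linear_combination (star d) * hBez + ((m:ℤi)*α + w*β) * hstar
      + (β * star β) * hwconj + (β * star β) * hkc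
  have hmnorm : m ∣ d.norm := by
    refine (Zsqrtd.intCast_dvd_intCast (d := -1) m (Zsqrtd.norm d)).mp ?_
    rw [Zsqrtd.norm_eq_mul_conj]
    exact ⟨_, key⟩
  have hdstar1 : star d ∣ (m : ℤi) := by
    have := hstard hd1
    rwa [star_intCast] at this
  have hcop : IsCoprime d (star d) := by
    rw [← EuclideanDomain.gcd_isUnit_iff]
    set g := EuclideanDomain.gcd d (star d) with hg
    have hg1 : g ∣ d := EuclideanDomain.gcd_dvd_left _ _
    have hg2 : g ∣ star d := EuclideanDomain.gcd_dvd_right _ _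
    have hgw : g ∣ w - star w := dvd_sub (hg1.trans hd2) (hg2.trans (hstard hd2))
    have hnorm4 : g.norm ∣ 4 := by
      obtain ⟨c, hc⟩ := hgw
      have h4 : (w - star w).norm = 4 := by
        have hww : w - star w = (⟨0, 2⟩ : ℤi) := by
          ext <;> simp [hw, Zsqrtd.re_star, Zsqrtd.im_star]
        rw [hww, Zsqrtd.norm_def]; norm_num
      rw [← h4, hc, Zsqrtd.norm_mul]; exact dvd_mul_right _ _
    have hnormm : g.norm ∣ m * m := by
      obtain ⟨c, hc⟩ := hg1.trans hd1
      have hmm : ((m:ℤi)).norm = m * m := by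
        rw [Zsqrtd.norm_def, Zsqrtd.re_intCast, Zsqrtd.im_intCast]; ring
      rw [← hmm, hc, Zsqrtd.norm_mul]; exact dvd_mul_right _ _
    have hgodd : ¬ (2:ℤ) ∣ g.norm := fun h2 => hodd
      ((Int.prime_two.2.2 _ _ (h2.trans hnormm)).elim id id)
    rw [← Zsqrtd.norm_eq_one_iff]
    have h4 : g.norm.natAbs ∣ 4 := by
      have := Int.natAbs_dvd_natAbs.mpr hnorm4
      simpa using this
    have hodd' : ¬ 2 ∣ g.norm.natAbs := fun h =>
      hgodd (Int.natAbs_dvd_natAbs.mp (by simpa using h))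
    have hcop2 : Nat.Coprime g.norm.natAbs 4 := by
      have : Nat.Coprime g.norm.natAbs 2 :=
        ((Nat.prime_two.coprime_iff_not_dvd).mpr hodd').symm
      simpa using this.pow_right 2
    exact hcop2.eq_one_of_dvd h4
  have hdm : (d.norm : ℤi) ∣ (m : ℤi) := by
    rw [Zsqrtd.norm_eq_mul_conj]; exact hcop.mul_dvd hd1 hdstar1
  have hnd : d.norm = m :=
    Int.dvd_antisymm (Zsqrtd.norm_nonneg (by norm_num) d) hm.le
      ((Zsqrtd.intCast_dvd_intCast (d := -1) _ _).mp hdm) hmnorm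
  refine ⟨d.re, d.im, ?_, ?_⟩
  · rw [Int.isCoprime_iff_gcd_eq_one]
    have hgd : ((Int.gcd d.re d.im : ℤ) : ℤi) ∣ d :=
      (Zsqrtd.intCast_dvd (d := -1) _ _).mpr ⟨Int.gcd_dvd_left _ _, Int.gcd_dvd_right _ _⟩
    have h1 : (Int.gcd d.re d.im : ℤ) ∣ w.im :=
      ((Zsqrtd.intCast_dvd (d := -1) _ _).mp (hgd.trans hd2)).2
    have : (Int.gcd d.re d.im : ℤ) ∣ 1 := by simpa [hw] using h1
    exact_mod_cast Nat.dvd_one.mp (by exact_mod_cast this)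
  · rw [← hnd, Zsqrtd.norm_def]; ring

lemma mod2_lemma : ∀ a b : ZMod 2, ¬(a = 0 ∧ b = 0) → a^2 - a*b + b^2 ≠ 0 := by decide

lemma mod9_lemma : ∀ a b c e : ZMod 9,
    2*(a^2 - a*b + b^2) = 3*c^2 - e^2 →
    ¬(ZMod.castHom (by norm_num : (3:ℕ) ∣ 9) (ZMod 3) a = 0 ∧
      ZMod.castHom (by norm_num : (3:ℕ) ∣ 9) (ZMod 3) b = 0) →
    ¬(ZMod.castHom (by norm_num : (3:ℕ) ∣ 9) (ZMod 3) c = 0 ∧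
      ZMod.castHom (by norm_num : (3:ℕ) ∣ 9) (ZMod 3) e = 0) →
    ZMod.castHom (by norm_num : (3:ℕ) ∣ 9) (ZMod 3) (a^2 - a*b + b^2) ≠ 0 := by decide

theorem stmt_14 :
    let A : Set ℤ := {n | ∃ x y : ℤ, Int.gcd x y = 1 ∧ n = 3*x^2 - y^2}
    let B : Set ℤ := {n | ∃ x y : ℤ, Int.gcd x y = 1 ∧ n = x^2 + y^2}
    let C : Set ℤ := {n | ∃ x y : ℤ, Int.gcd x y = 1 ∧ n = 2*(x^2 - x*y + y^2)}
    C ∩ A ⊆ B ∧ ¬ (B ⊆ C ∩ A) := by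
  intro A B C
  constructor
  · rintro n ⟨⟨x, y, hxy, hnC⟩, ⟨u, v, huv, hnA⟩⟩
    set m : ℤ := x^2 - x*y + y^2 with hm
    have hxyc : IsCoprime x y := Int.isCoprime_iff_gcd_eq_one.mpr hxy
    have huvc : IsCoprime u v := Int.isCoprime_iff_gcd_eq_one.mpr huv
    have hxy2 : ¬((2:ℤ) ∣ x ∧ (2:ℤ) ∣ y) := by
      rintro ⟨h1, h2⟩
      have h := Int.dvd_gcd h1 h2
      rw [hxy] at h
      norm_num at h
    have hxy3 : ¬((3:ℤ) ∣ x ∧ (3:ℤ) ∣ y) := by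
      rintro ⟨h1, h2⟩
      have h := Int.dvd_gcd h1 h2
      rw [hxy] at h
      norm_num at h
    have huv3 : ¬((3:ℤ) ∣ u ∧ (3:ℤ) ∣ v) := by
      rintro ⟨h1, h2⟩
      have h := Int.dvd_gcd h1 h2
      rw [huv] at h
      norm_num at h
    have h2m : 2*m = 3*u^2 - v^2 := by rw [hm]; linear_combination hnA - hnC
    -- m is odd
    have hmodd : ¬ (2:ℤ) ∣ m := by
      intro h2
      have h0 : ((x^2 - x*y + y^2 : ℤ) : ZMod 2) = 0 :=
        (ZMod.intCast_zmod_eq_zero_iff_dvd _ 2).mpr (by exact_mod_cast hm ▸ h2)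
      push_cast at h0
      refine mod2_lemma (x : ZMod 2) (y : ZMod 2) ?_ h0
      rintro ⟨e1, e2⟩
      exact hxy2 ⟨by exact_mod_cast (ZMod.intCast_zmod_eq_zero_iff_dvd x 2).mp e1,
        by exact_mod_cast (ZMod.intCast_zmod_eq_zero_iff_dvd y 2).mp e2⟩
    -- m is not divisible by 3
    have h3m : ¬ (3:ℤ) ∣ m := by
      intro h3
      have heq9 : (2*((x:ZMod 9)^2 - (x:ZMod 9)*(y:ZMod 9) + (y:ZMod 9)^2))
          = 3*(u:ZMod 9)^2 - (v:ZMod 9)^2 := by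
        have h1 := congrArg (fun z : ℤ => (z : ZMod 9)) (hnC.symm.trans hnA)
        push_cast at h1
        have hm9 : ((m:ℤ) : ZMod 9)
            = (x:ZMod 9)^2 - (x:ZMod 9)*(y:ZMod 9) + (y:ZMod 9)^2 := by
          rw [hm]; push_cast; ring
        linear_combination h1 - 2*hm9
      refine mod9_lemma (x:ZMod 9) (y:ZMod 9) (u:ZMod 9) (v:ZMod 9) heq9 ?_ ?_ ?_
      · rintro ⟨e1, e2⟩
        rw [map_intCast] at e1 e2
        exact hxy3 ⟨by exact_mod_cast (ZMod.intCast_zmod_eq_zero_iff_dvd x 3).mp e1,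
          by exact_mod_cast (ZMod.intCast_zmod_eq_zero_iff_dvd y 3).mp e2⟩
      · rintro ⟨e1, e2⟩
        rw [map_intCast] at e1 e2
        exact huv3 ⟨by exact_mod_cast (ZMod.intCast_zmod_eq_zero_iff_dvd u 3).mp e1,
          by exact_mod_cast (ZMod.intCast_zmod_eq_zero_iff_dvd v 3).mp e2⟩
      · have hcast : ((x:ZMod 9)^2 - (x:ZMod 9)*(y:ZMod 9) + (y:ZMod 9)^2)
            = ((m : ℤ) : ZMod 9) := by rw [hm]; push_cast; ring
        rw [hcast, map_intCast]
        exact (ZMod.intCast_zmod_eq_zero_iff_dvd m 3).mpr (by exact_mod_cast h3)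
    -- coprimality facts
    have hym : IsCoprime y m := by
      have h := (IsCoprime.pow_right (n := 2) hxyc.symm).add_mul_left_right (y - x)
      rwa [show x^2 + y*(y-x) = m by rw [hm]; ring] at h
    have h3v : ¬ (3:ℤ) ∣ v := by
      intro h3
      apply h3m
      have h2mdvd : (3:ℤ) ∣ 2*m := by
        rw [h2m]
        exact dvd_sub (Dvd.dvd.mul_right (dvd_refl 3) _) (by
          obtain ⟨w', hw'⟩ := h3
          exact ⟨3*w'^2, by rw [hw']; ring⟩)
      rcases Int.prime_three.2.2 2 m h2mdvd with h | h
      · norm_num at h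
      · exact h
    have hvm : IsCoprime v m := by
      have cop3 : IsCoprime v 3 := (Int.prime_three.coprime_iff_not_dvd.mpr h3v).symm
      have copu2 : IsCoprime v (u^2) := IsCoprime.pow_right (n := 2) huvc.symm
      have h := (cop3.mul_right copu2).add_mul_left_right (-v)
      have h2 : IsCoprime v (2*m) := by
        rwa [show 3*u^2 + v*(-v) = 2*m by linear_combination -h2m] at h
      exact h2.of_mul_right_right
    have copyvm : IsCoprime (y*v) m := IsCoprime.mul_left hym hvm
    obtain ⟨c, t, hct⟩ := copyvm
    -- m divides s^2 + 1 for s = ((2x-y)u)c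
    have hAB : ((2*x - y)*u)^2 + (y*v)^2 = 2*m*(2*u^2 - y^2) := by
      linear_combination (-4*u^2) * hm + y^2 * h2m
    have h1 : m ∣ ((2*x-y)*u)^2 + (y*v)^2 := ⟨2*(2*u^2 - y^2), by linear_combination hAB⟩
    have h2 : m ∣ (c*(y*v) - 1) := ⟨-t, by linear_combination hct⟩
    have hdvd : m ∣ (((2*x-y)*u)*c)^2 + 1 := by
      have hid : (((2*x-y)*u)*c)^2 + 1
          = c^2*(((2*x-y)*u)^2 + (y*v)^2) - (c*(y*v) - 1)*(c*(y*v) + 1) := by ring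
      rw [hid]
      exact dvd_sub (Dvd.dvd.mul_left h1 _) (Dvd.dvd.mul_right h2 _)
    -- m is positive
    have hsq : ∀ z : ℤ, z ≠ 0 → 1 ≤ z^2 := by
      intro z hz
      rcases lt_or_gt_of_ne hz with h | h <;> nlinarith
    have hmpos : 0 < m := by
      have hne : ¬(x = 0 ∧ y = 0) := by
        rintro ⟨rfl, rfl⟩
        norm_num at hxy
      have h4 : 4*m = (2*x - y)^2 + 3*y^2 := by rw [hm]; ring
      rcases eq_or_ne y 0 with hy | hy
      · have hx : x ≠ 0 := fun hx0 => hne ⟨hx0, hy⟩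
        nlinarith [hsq x hx]
      · nlinarith [hsq y hy, sq_nonneg (2*x - y)]
    obtain ⟨a, b, hab, habm⟩ := primitive_sum_sq hmpos hmodd hdvd
    -- a + b is odd
    have h2ab : ¬ (2:ℤ) ∣ (a+b) := by
      intro h
      apply hmodd
      rw [← habm]
      obtain ⟨k2, hk2⟩ := h
      exact ⟨2*k2^2 - a*b, by linear_combination (a + b + 2*k2) * hk2⟩
    have cop2 : IsCoprime (a+b) (2:ℤ) := by
      rcases Int.even_or_odd (a+b) with he | ho
      · exact absurd he.two_dvd h2ab
      · obtain ⟨k2, hk2⟩ := ho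
        exact ⟨1, -k2, by linarith⟩
    have copfinal : IsCoprime (a+b) (a-b) := by
      have h1' : IsCoprime (a+b) b := by
        have := hab.add_mul_left_left 1
        rwa [mul_one] at this
      have h2' : IsCoprime (a+b) (-(2:ℤ) * b) := cop2.neg_right.mul_right h1'
      have h3' := h2'.add_mul_left_right 1
      rwa [show -(2:ℤ)*b + (a+b)*1 = a - b by ring] at h3'
    exact ⟨a+b, a-b, Int.isCoprime_iff_gcd_eq_one.mp copfinal,
      by linear_combination hnC - 2*hm - 2*habm⟩
  · intro hBsub
    have h1B : (1:ℤ) ∈ B := ⟨1, 0, by norm_num⟩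
    obtain ⟨⟨x, y, hxy, h1C⟩, -⟩ := hBsub h1B
    have : (2:ℤ) ∣ 1 := ⟨x^2 - x*y + y^2, h1C⟩
    norm_num at this
end

section
/- Let D be a positive odd integer and let A be an integer with 0 < A < D, gcd(A, D) = 1, and A ≡ 1 or A ≡ −1 (mod 6). Suppose that no prime p with p ≡ 11 (mod 12) divides 3D² − A². Then there exist integers B and C with gcd(B, C) = 1 such that A² + B² + C² = 3D²; in particular (A, B, C, D) is a primitive solution of A² + B² + C² = 3D². -/
/-- Sign-choice lemma: multiplying a primitive representation by a prime sum of two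
coprime squares, one of the two Brahmagupta–Fibonacci combinations is primitive. -/
lemma sign_choice {x y u v : ℤ} (hxy : IsCoprime x y) (huv : IsCoprime u v)
    (hp : Prime (u ^ 2 + v ^ 2)) (hodd : Odd (u ^ 2 + v ^ 2) ∨ Odd (x ^ 2 + y ^ 2)) :
    IsCoprime (u * x - v * y) (u * y + v * x) ∨ IsCoprime (u * x + v * y) (u * y - v * x) := by
  by_contra hcon
  push_neg at hcon
  obtain ⟨h1, h2⟩ := hcon
  -- extract prime divisors of the two failing pairs
  have key : ∀ a b p1 p2 p3 p4 p5 p6 p7 p8 : ℤ, ¬ IsCoprime a b →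
      x * (u ^ 2 + v ^ 2) = p1 * a + p2 * b → y * (u ^ 2 + v ^ 2) = p3 * a + p4 * b →
      u * (x ^ 2 + y ^ 2) = p5 * a + p6 * b → v * (x ^ 2 + y ^ 2) = p7 * a + p8 * b →
      ∃ q : ℕ, q.Prime ∧ (q : ℤ) ∣ a ∧ (q : ℤ) ∣ b ∧
        (q : ℤ) ∣ u ^ 2 + v ^ 2 ∧ (q : ℤ) ∣ x ^ 2 + y ^ 2 := by
    intro a b p1 p2 p3 p4 p5 p6 p7 p8 hab e1 e2 e3 e4
    rw [Int.isCoprime_iff_gcd_eq_one] at hab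
    rcases Nat.eq_zero_or_pos (Int.gcd a b) with h0 | hpos
    · -- then a = b = 0, so x = y = 0, contradicting coprimality
      rw [Int.gcd_eq_zero_iff] at h0
      obtain ⟨ha0, hb0⟩ := h0
      have hx0 : x * (u ^ 2 + v ^ 2) = 0 := by rw [e1, ha0, hb0]; ring
      have hy0 : y * (u ^ 2 + v ^ 2) = 0 := by rw [e2, ha0, hb0]; ring
      have hP0 : u ^ 2 + v ^ 2 ≠ 0 := hp.ne_zero
      have hx : x = 0 := by
        rcases mul_eq_zero.mp hx0 with h | h
        · exact h
        · exact absurd h hP0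
      have hy : y = 0 := by
        rcases mul_eq_zero.mp hy0 with h | h
        · exact h
        · exact absurd h hP0
      rw [hx, hy] at hxy
      exact (not_isCoprime_zero_zero hxy).elim
    · obtain ⟨q, hq, hqd⟩ := Nat.exists_prime_and_dvd (fun h => hab h)
      have hqa : (q : ℤ) ∣ a := dvd_trans (Int.natCast_dvd_natCast.mpr hqd) (Int.gcd_dvd_left _ _)
      have hqb : (q : ℤ) ∣ b := dvd_trans (Int.natCast_dvd_natCast.mpr hqd) (Int.gcd_dvd_right _ _)
      have hqZ : Prime (q : ℤ) := Nat.prime_iff_prime_int.mp hq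
      have hqxP : (q : ℤ) ∣ x * (u ^ 2 + v ^ 2) := by
        rw [e1]; exact dvd_add (hqa.mul_left p1) (hqb.mul_left p2)
      have hqyP : (q : ℤ) ∣ y * (u ^ 2 + v ^ 2) := by
        rw [e2]; exact dvd_add (hqa.mul_left p3) (hqb.mul_left p4)
      have hquM : (q : ℤ) ∣ u * (x ^ 2 + y ^ 2) := by
        rw [e3]; exact dvd_add (hqa.mul_left p5) (hqb.mul_left p6)
      have hqvM : (q : ℤ) ∣ v * (x ^ 2 + y ^ 2) := by
        rw [e4]; exact dvd_add (hqa.mul_left p7) (hqb.mul_left p8)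
      have hqP : (q : ℤ) ∣ u ^ 2 + v ^ 2 := by
        rcases (hqZ.dvd_mul.mp hqxP) with h | h
        · rcases (hqZ.dvd_mul.mp hqyP) with h' | h'
          · exact absurd (hxy.isUnit_of_dvd' h h') hqZ.not_unit
          · exact h'
        · exact h
      have hqM : (q : ℤ) ∣ x ^ 2 + y ^ 2 := by
        rcases (hqZ.dvd_mul.mp hquM) with h | h
        · rcases (hqZ.dvd_mul.mp hqvM) with h' | h'
          · exact absurd (huv.isUnit_of_dvd' h h') hqZ.not_unit
          · exact h'
        · exact h
      exact ⟨q, hq, hqa, hqb, hqP, hqM⟩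
  obtain ⟨q, hq, hqa1, hqb1, hqP, hqM⟩ :=
    key _ _ u v (-v) u x y (-y) x h1 (by ring) (by ring) (by ring) (by ring)
  obtain ⟨r, hr, hra2, hrb2, hrP, _⟩ :=
    key _ _ u (-v) v u x y y (-x) h2 (by ring) (by ring) (by ring) (by ring)
  -- both q and r are associated to the prime u^2+v^2, hence q = r
  have hqZ : Prime (q : ℤ) := Nat.prime_iff_prime_int.mp hq
  have hrZ : Prime (r : ℤ) := Nat.prime_iff_prime_int.mp hr
  have haq : Associated (q : ℤ) (u ^ 2 + v ^ 2) := hqZ.associated_of_dvd hp hqP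
  have har : Associated (r : ℤ) (u ^ 2 + v ^ 2) := hrZ.associated_of_dvd hp hrP
  have hqr : q = r := by
    have := (haq.trans har.symm)
    rw [Int.associated_iff_natAbs] at this
    simpa using this
  subst hqr
  -- q divides 2ux, 2vy, 2uy, 2vx
  have h2ux : (q : ℤ) ∣ 2 * (u * x) := by
    have := dvd_add hqa1 hra2
    rw [show 2 * (u * x) = u * x - v * y + (u * x + v * y) by ring]; exact this
  have h2vy : (q : ℤ) ∣ 2 * (v * y) := by
    have := dvd_sub hra2 hqa1
    rw [show 2 * (v * y) = u * x + v * y - (u * x - v * y) by ring]; exact this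
  have h2uy : (q : ℤ) ∣ 2 * (u * y) := by
    have := dvd_add hqb1 hrb2
    rw [show 2 * (u * y) = u * y + v * x + (u * y - v * x) by ring]; exact this
  have h2vx : (q : ℤ) ∣ 2 * (v * x) := by
    have := dvd_sub hqb1 hrb2
    rw [show 2 * (v * x) = u * y + v * x - (u * y - v * x) by ring]; exact this
  by_cases hq2 : (q : ℤ) ∣ 2
  · -- q = 2, so both sums of squares are even, contradicting `hodd`
    have hq2' : q = 2 := by
      have hq2n : q ∣ 2 := by exact_mod_cast hq2
      exact (Nat.prime_dvd_prime_iff_eq hq Nat.prime_two).mp hq2n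
    subst hq2'
    rcases hodd with h | h
    · obtain ⟨c, hc⟩ := h
      obtain ⟨e, he⟩ := hqP
      have : (2 : ℤ) * e = 2 * c + 1 := by
        rw [← hc]; exact_mod_cast he.symm
      omega
    · obtain ⟨c, hc⟩ := h
      obtain ⟨e, he⟩ := hqM
      have : (2 : ℤ) * e = 2 * c + 1 := by
        rw [← hc]; exact_mod_cast he.symm
      omega
  · have hqux : (q : ℤ) ∣ u * x := (hqZ.dvd_mul.mp h2ux).resolve_left hq2
    have hqvy : (q : ℤ) ∣ v * y := (hqZ.dvd_mul.mp h2vy).resolve_left hq2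
    have hquy : (q : ℤ) ∣ u * y := (hqZ.dvd_mul.mp h2uy).resolve_left hq2
    have hqvx : (q : ℤ) ∣ v * x := (hqZ.dvd_mul.mp h2vx).resolve_left hq2
    rcases hqZ.dvd_mul.mp hqux with hu' | hx'
    · -- q ∣ u, then q ∤ v, so q ∣ x and q ∣ y
      have hv' : ¬ (q : ℤ) ∣ v := fun hv =>
        hqZ.not_unit (huv.isUnit_of_dvd' hu' hv)
      have hx' : (q : ℤ) ∣ x := (hqZ.dvd_mul.mp hqvx).resolve_left hv'
      have hy' : (q : ℤ) ∣ y := (hqZ.dvd_mul.mp hqvy).resolve_left hv'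
      exact hqZ.not_unit (hxy.isUnit_of_dvd' hx' hy')
    · have hy' : (q : ℤ) ∣ y := by
        rcases hqZ.dvd_mul.mp hquy with h | h
        · -- q ∣ u together with q ∣ x gives contradiction below anyway; derive y
          rcases hqZ.dvd_mul.mp hqvy with h' | h'
          · exact absurd (huv.isUnit_of_dvd' h h') hqZ.not_unit
          · exact h'
        · exact h
      exact hqZ.not_unit (hxy.isUnit_of_dvd' hx' hy')

/-- Any odd natural number all of whose prime factors are ≡ 1 mod 4 is a sum of
two coprime squares. -/
lemma coprime_rep : ∀ m : ℕ, Odd m → (∀ p : ℕ, p.Prime → p ∣ m → p % 4 = 1) →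
    ∃ x y : ℤ, IsCoprime x y ∧ (m : ℤ) = x ^ 2 + y ^ 2 := by
  refine induction_on_primes ?_ ?_ ?_
  · intro h; simp at h
  · intro _ _; exact ⟨1, 0, isCoprime_one_left, by norm_num⟩
  · intro p a hp ih hodd hfac
    have hp4 : p % 4 = 1 := hfac p hp (dvd_mul_right _ _)
    haveI : Fact p.Prime := ⟨hp⟩
    obtain ⟨u, v, huv⟩ := Nat.Prime.sq_add_sq (p := p) (by omega)
    have hpe : ((u : ℤ)) ^ 2 + (v : ℤ) ^ 2 = (p : ℤ) := by exact_mod_cast huv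
    have hPprime : Prime ((u : ℤ) ^ 2 + (v : ℤ) ^ 2) := by
      rw [hpe]; exact Nat.prime_iff_prime_int.mp hp
    have hcuv : IsCoprime (u : ℤ) (v : ℤ) := by
      rw [Int.isCoprime_iff_gcd_eq_one, Int.gcd_natCast_natCast]
      set g := Nat.gcd u v with hg
      have hg2 : g ^ 2 ∣ p := by
        rw [← huv]
        exact dvd_add (pow_dvd_pow_of_dvd (Nat.gcd_dvd_left u v) 2)
          (pow_dvd_pow_of_dvd (Nat.gcd_dvd_right u v) 2)
      have h2le := hp.two_le
      rcases (Nat.Prime.eq_one_or_self_of_dvd hp _ hg2) with h | h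
      · exact Nat.dvd_one.mp (h ▸ dvd_pow_self g two_ne_zero)
      · exfalso
        have hgp : g ∣ p := dvd_trans (dvd_pow_self g two_ne_zero) hg2
        rcases (Nat.Prime.eq_one_or_self_of_dvd hp _ hgp) with h' | h'
        · rw [h'] at h; simp at h; omega
        · rw [h'] at h; nlinarith
    have hodda : Odd a := (Nat.odd_mul.mp hodd).2
    obtain ⟨x, y, hxy, hae⟩ := ih hodda (fun r hr hra => hfac r hr (Dvd.dvd.mul_left hra p))
    have hoddP : Odd ((u : ℤ) ^ 2 + (v : ℤ) ^ 2) := by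
      rw [hpe, Int.odd_coe_nat]
      rw [Nat.odd_iff]; omega
    rcases sign_choice hxy hcuv hPprime (Or.inl hoddP) with h | h
    · refine ⟨(u : ℤ) * x - (v : ℤ) * y, (u : ℤ) * y + (v : ℤ) * x, h, ?_⟩
      push_cast
      rw [← hpe, hae]; ring
    · refine ⟨(u : ℤ) * x + (v : ℤ) * y, (u : ℤ) * y - (v : ℤ) * x, h, ?_⟩
      push_cast
      rw [← hpe, hae]; ring

theorem stmt_16 (D A : ℤ) (hDpos : 0 < D) (hDodd : Odd D)
    (hApos : 0 < A) (hAD : A < D) (hgcdAD : Int.gcd A D = 1)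
    (hA6 : A ≡ 1 [ZMOD 6] ∨ A ≡ -1 [ZMOD 6])
    (hnop : ∀ p : ℕ, p.Prime → p % 12 = 11 → ¬ ((p : ℤ) ∣ 3*D^2 - A^2)) :
    ∃ B C : ℤ, Int.gcd B C = 1 ∧ A^2 + B^2 + C^2 = 3*D^2 ∧
      Int.gcd (Int.gcd A B) C = 1 := by
  -- basic congruences for A
  have h6 : (6 : ℤ) ∣ 1 - A ∨ (6 : ℤ) ∣ -1 - A := by
    rcases hA6 with h | h
    · exact Or.inl h.dvd
    · exact Or.inr h.dvd
  have hAodd : Odd A := by rcases h6 with h | h <;> (rw [Int.odd_iff]; omega)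
  obtain ⟨a, ha⟩ := hAodd
  obtain ⟨d, hd⟩ := hDodd
  have hNpos : 0 < 3 * D ^ 2 - A ^ 2 := by nlinarith
  obtain ⟨K4, hK4⟩ : ∃ K, 3 * D ^ 2 - A ^ 2 = 4 * K + 2 :=
    ⟨3 * d ^ 2 + 3 * d - a ^ 2 - a, by rw [hd, ha]; ring⟩
  obtain ⟨K3, hK3⟩ : ∃ K, 3 * D ^ 2 - A ^ 2 = 3 * K + 2 := by
    rcases h6 with ⟨k, hk⟩ | ⟨k, hk⟩
    · refine ⟨D ^ 2 - 12 * k ^ 2 + 4 * k - 1, ?_⟩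
      have hA' : A = 1 - 6 * k := by linarith
      rw [hA']; ring
    · refine ⟨D ^ 2 - 12 * k ^ 2 - 4 * k - 1, ?_⟩
      have hA' : A = -1 - 6 * k := by linarith
      rw [hA']; ring
  set N : ℤ := 3 * D ^ 2 - A ^ 2 with hN
  obtain ⟨n, hn⟩ : ∃ n : ℕ, (n : ℤ) = N := ⟨N.toNat, Int.toNat_of_nonneg (by omega)⟩
  obtain ⟨m, hm⟩ : ∃ m : ℕ, n = 2 * m := by
    have : (2 : ℕ) ∣ n := by
      have : (2 : ℤ) ∣ (n : ℤ) := by omega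
      exact_mod_cast this
    exact this
  have hmodd : Odd m := by rw [Nat.odd_iff]; omega
  -- every prime factor of m is ≡ 1 mod 4
  have hfac : ∀ q : ℕ, q.Prime → q ∣ m → q % 4 = 1 := by
    intro q hq hqm
    have hqn : (q : ℤ) ∣ N := by
      rw [← hn]
      have : q ∣ n := by rw [hm]; exact hqm.mul_left 2
      exact_mod_cast this
    have hq2 : q ≠ 2 := by
      rintro rfl
      obtain ⟨t, ht⟩ := hqm
      omega
    have hq3 : q ≠ 3 := by
      rintro rfl
      omega
    haveI : Fact q.Prime := ⟨hq⟩
    have hqZ : Prime (q : ℤ) := Nat.prime_iff_prime_int.mp hq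
    have hqD : ¬ (q : ℤ) ∣ D := by
      intro hdvd
      have hqD2 : (q : ℤ) ∣ 3 * D ^ 2 := Dvd.dvd.mul_left (hdvd.pow two_ne_zero) 3
      have hA2eq : A ^ 2 = 3 * D ^ 2 - N := by rw [hN]; ring
      have hqA2 : (q : ℤ) ∣ A ^ 2 := by rw [hA2eq]; exact dvd_sub hqD2 hqn
      have hqA : (q : ℤ) ∣ A := hqZ.dvd_of_dvd_pow hqA2
      have : (q : ℤ) ∣ (Int.gcd A D : ℤ) := Int.dvd_coe_gcd hqA hdvd
      rw [hgcdAD] at this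
      have := Int.le_of_dvd (by norm_num) this
      have := hq.two_le
      omega
    have h0 : ((3 * D ^ 2 - A ^ 2 : ℤ) : ZMod q) = 0 := by
      rw [ZMod.intCast_zmod_eq_zero_iff_dvd]
      exact hqn
    push_cast at h0
    have hD0 : (D : ZMod q) ≠ 0 := by
      rw [Ne, ZMod.intCast_zmod_eq_zero_iff_dvd]
      exact hqD
    have hsq : IsSquare (3 : ZMod q) := by
      refine ⟨(A : ZMod q) * (D : ZMod q)⁻¹, ?_⟩
      field_simp
      linear_combination h0
    by_contra hq4
    have hq4' : q % 4 = 3 := by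
      have h2le := hq.two_le
      have hqo : q % 2 = 1 := Nat.odd_iff.mp (hq.odd_of_ne_two hq2)
      omega
    haveI : Fact (Nat.Prime 3) := ⟨by norm_num⟩
    have hiff := ZMod.exists_sq_eq_prime_iff_of_mod_four_eq_three (p := 3) (q := q)
      (by norm_num) hq4' (fun h => hq3 h.symm)
    have h3q : IsSquare (((3 : ℕ)) : ZMod q) := by
      have : (((3 : ℕ)) : ZMod q) = (3 : ZMod q) := by push_cast; ring
      rw [this]; exact hsq
    have hnsq : ¬ IsSquare ((q : ℕ) : ZMod 3) := fun h => (hiff.mp h) h3q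
    have hq3' : q % 3 = 2 := by
      have h3dvd : ¬ (3 ∣ q) := fun h =>
        hq3 ((Nat.prime_dvd_prime_iff_eq (by norm_num) hq).mp h).symm
      have hcase : q % 3 = 1 ∨ q % 3 = 2 := by omega
      rcases hcase with h | h
      · exfalso
        apply hnsq
        have : ((q : ℕ) : ZMod 3) = 1 := by rw [← ZMod.natCast_mod, h]; norm_num
        rw [this]
        exact ⟨1, by ring⟩
      · exact h
    exact hnop q hq (by omega) hqn
  -- build the coprime representation
  obtain ⟨x, y, hxy, hme⟩ := coprime_rep m hmodd hfac
  have h2prime : Prime ((1 : ℤ) ^ 2 + 1 ^ 2) := by norm_num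
  have hoddM : Odd (x ^ 2 + y ^ 2) := by
    rw [← hme, Int.odd_coe_nat]; exact hmodd
  have hBCsq : ∀ B C : ℤ, B ^ 2 + C ^ 2 = 2 * (x ^ 2 + y ^ 2) →
      A ^ 2 + B ^ 2 + C ^ 2 = 3 * D ^ 2 := by
    intro B C hBC
    have h2m : ((n : ℕ) : ℤ) = 2 * (x ^ 2 + y ^ 2) := by
      rw [← hme, hm]; push_cast; ring
    have : B ^ 2 + C ^ 2 = N := by rw [hBC, ← h2m, hn]
    rw [hN] at this
    linarith
  have final : ∀ B C : ℤ, IsCoprime B C → B ^ 2 + C ^ 2 = 2 * (x ^ 2 + y ^ 2) →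
      ∃ B' C' : ℤ, Int.gcd B' C' = 1 ∧ A ^ 2 + B' ^ 2 + C' ^ 2 = 3 * D ^ 2 ∧
        Int.gcd (Int.gcd A B') C' = 1 := by
    intro B C hBC hsq2
    refine ⟨B, C, Int.isCoprime_iff_gcd_eq_one.mp hBC, hBCsq B C hsq2, ?_⟩
    have hd1 : (Int.gcd (Int.gcd A B) C : ℤ) ∣ B :=
      dvd_trans (Int.gcd_dvd_left _ _) (Int.gcd_dvd_right _ _)
    have hd2 : (Int.gcd (Int.gcd A B) C : ℤ) ∣ C := Int.gcd_dvd_right _ _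
    have : (Int.gcd (Int.gcd A B) C : ℤ) ∣ (Int.gcd B C : ℤ) := Int.dvd_coe_gcd hd1 hd2
    rw [Int.isCoprime_iff_gcd_eq_one.mp hBC] at this
    have : Int.gcd (Int.gcd A B) C ∣ 1 := by exact_mod_cast this
    exact Nat.dvd_one.mp this
  rcases sign_choice hxy isCoprime_one_left h2prime (Or.inr hoddM) with h | h
  · exact final _ _ h (by ring)
  · exact final _ _ h (by ring)
end

section
/- Let A, B, C, D be integers with A² + B² + C² = 3D², and let U = 3D − (A + B + C) and V = 3D + (A + B + C). Suppose A, B, C, D are all odd and gcd(A, B, C) = 1. Then U and V are both even, and it is not the case that 4 divides both U and V; moreover, for every prime q with q ≡ −1 (mod 6), q does not divide both U and V. -/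
lemma key_19 (q : ℕ) (hq : q.Prime) (h6 : q % 6 = 5) (x y : ℤ)
    (h : (q : ℤ) ∣ x^2 - x*y + y^2) : (q : ℤ) ∣ x ∧ (q : ℤ) ∣ y := by
  haveI : Fact q.Prime := ⟨hq⟩
  have h0 : (x : ZMod q)^2 - (x : ZMod q) * (y : ZMod q) + (y : ZMod q)^2 = 0 := by
    have := (ZMod.intCast_zmod_eq_zero_iff_dvd _ q).mpr h
    push_cast at this
    linear_combination this
  have hy : (y : ZMod q) = 0 := by
    by_contra hy
    set z : ZMod q := (x : ZMod q) * (y : ZMod q)⁻¹ with hzdef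
    have hz : z^2 - z + 1 = 0 := by
      have hmul : (z^2 - z + 1) * (y : ZMod q)^2
          = (x : ZMod q)^2 - (x : ZMod q) * (y : ZMod q) + (y : ZMod q)^2 := by
        have hzy : z * (y : ZMod q) = (x : ZMod q) := by
          rw [hzdef, mul_assoc, inv_mul_cancel₀ hy, mul_one]
        linear_combination (z * (y : ZMod q) + (x : ZMod q) - (y : ZMod q)) * hzy
      have := hmul.trans h0
      rcases mul_eq_zero.mp this with h' | h'
      · exact h'
      · exact absurd (pow_eq_zero_iff (by norm_num) |>.mp h') hy
    have hz3 : z^3 = -1 := by linear_combination (z + 1) * hz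
    have hz6 : z^6 = 1 := by
      have : z^6 = (z^3)^2 := by ring
      rw [this, hz3]; ring
    have hz0 : z ≠ 0 := by
      intro h'
      rw [h'] at hz
      norm_num at hz
    have hord6 : orderOf z ∣ 6 := orderOf_dvd_of_pow_eq_one hz6
    have hordq : orderOf z ∣ q - 1 :=
      orderOf_dvd_of_pow_eq_one (ZMod.pow_card_sub_one_eq_one hz0)
    obtain ⟨k, hk⟩ : ∃ k, q - 1 = 4 + k * 6 := ⟨(q - 5) / 6, by omega⟩
    have hgcd2 : Nat.gcd 6 (q - 1) = 2 := by
      rw [hk, Nat.gcd_add_mul_right_right]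
      norm_num
    have hord2 : orderOf z ∣ 2 := hgcd2 ▸ Nat.dvd_gcd hord6 hordq
    have hz2 : z^2 = 1 := orderOf_dvd_iff_pow_eq_one.mp hord2
    have h3 : (3 : ZMod q) = 0 := by
      linear_combination (z + 2) * hz - (z + 1) * hz2
    have : q ∣ 3 := by
      have : ((3 : ℕ) : ZMod q) = 0 := by exact_mod_cast h3
      exact (ZMod.natCast_eq_zero_iff 3 q).mp this
    have := Nat.le_of_dvd (by norm_num) this
    omega
  have hx : (x : ZMod q) = 0 := by
    have hx2 : (x : ZMod q)^2 = 0 := by rw [hy] at h0; linear_combination h0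
    exact pow_eq_zero_iff (by norm_num : (2:ℕ) ≠ 0) |>.mp hx2
  exact ⟨(ZMod.intCast_zmod_eq_zero_iff_dvd _ q).mp hx,
         (ZMod.intCast_zmod_eq_zero_iff_dvd _ q).mp hy⟩

theorem stmt_19 (A B C D : ℤ) (heq : A^2 + B^2 + C^2 = 3 * D^2)
    (hA : Odd A) (hB : Odd B) (hC : Odd C) (hD : Odd D)
    (hgcd : Int.gcd (Int.gcd A B) C = 1) :
    let U : ℤ := 3*D - (A + B + C)
    let V : ℤ := 3*D + (A + B + C)
    Even U ∧ Even V ∧ ¬ ((4 ∣ U) ∧ (4 ∣ V)) ∧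
    ∀ q : ℕ, q.Prime → q % 6 = 5 → ¬ (((q : ℤ) ∣ U) ∧ ((q : ℤ) ∣ V)) := by
  intro U V
  show Even (3*D - (A + B + C)) ∧ Even (3*D + (A + B + C)) ∧
    ¬ ((4 ∣ 3*D - (A + B + C)) ∧ (4 ∣ 3*D + (A + B + C))) ∧
    ∀ q : ℕ, q.Prime → q % 6 = 5 →
      ¬ (((q : ℤ) ∣ 3*D - (A + B + C)) ∧ ((q : ℤ) ∣ 3*D + (A + B + C)))
  obtain ⟨a, ha⟩ := hA
  obtain ⟨b, hb⟩ := hB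
  obtain ⟨c, hc⟩ := hC
  obtain ⟨d, hd⟩ := hD
  have h3D : Odd (3*D) := ⟨3*d + 1, by omega⟩
  have hS : Odd (A + B + C) := ⟨a + b + c + 1, by omega⟩
  refine ⟨h3D.sub_odd hS, h3D.add_odd hS, ?_, ?_⟩
  · rintro ⟨⟨s, hs⟩, ⟨t, ht⟩⟩
    omega
  · rintro q hq h6 ⟨hU, hV⟩
    have hqodd : q % 2 = 1 := by omega
    have hsum : (q : ℤ) ∣ 2 * (A + B + C) := by
      have := dvd_sub hV hU
      rwa [show (2:ℤ) * (A + B + C) = (3*D + (A + B + C)) - (3*D - (A + B + C)) by ring]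
    have hq2 : ¬ (q : ℤ) ∣ 2 := by
      intro h
      have := Int.le_of_dvd (by norm_num) h
      have : q ≤ 2 := by exact_mod_cast this
      omega
    have hqprime : Prime (q : ℤ) := Int.prime_iff_natAbs_prime.mpr (by simpa using hq)
    have hABC : (q : ℤ) ∣ A + B + C := ((hqprime.dvd_mul).mp hsum).resolve_left hq2
    have hUV : (q : ℤ) ∣ 2 * ((A-B)^2 - (A-B)*(C-B) + (C-B)^2) := by
      have := hU.mul_right ((3*D + (A+B+C)) )
      have h2 : (3*D - (A + B + C)) * (3*D + (A+B+C))
          = 2 * ((A-B)^2 - (A-B)*(C-B) + (C-B)^2) := by linear_combination -3 * heq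
      exact h2 ▸ this
    have hform : (q : ℤ) ∣ (A-B)^2 - (A-B)*(C-B) + (C-B)^2 :=
      ((hqprime.dvd_mul).mp hUV).resolve_left hq2
    obtain ⟨hAB, hCB⟩ := key_19 q hq h6 _ _ hform
    have h3B : (q : ℤ) ∣ 3 * B := by
      have := dvd_sub (dvd_sub hABC hAB) hCB
      rwa [show (3:ℤ) * B = A + B + C - (A - B) - (C - B) by ring]
    have hq3 : ¬ (q : ℤ) ∣ 3 := by
      intro h
      have := Int.le_of_dvd (by norm_num) h
      have : q ≤ 3 := by exact_mod_cast this
      interval_cases q <;> omega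
    have hqB : (q : ℤ) ∣ B := ((hqprime.dvd_mul).mp h3B).resolve_left hq3
    have hqA : (q : ℤ) ∣ A := by
      have := dvd_add hAB hqB
      rwa [show A = A - B + B by ring]
    have hqC : (q : ℤ) ∣ C := by
      have := dvd_add hCB hqB
      rwa [show C = C - B + B by ring]
    have : (q : ℤ) ∣ (Int.gcd (Int.gcd A B) C : ℤ) :=
      Int.dvd_coe_gcd (Int.dvd_coe_gcd hqA hqB) hqC
    rw [hgcd] at this
    have : q ∣ 1 := by exact_mod_cast this
    exact absurd (Nat.dvd_one.mp this) hq.one_lt.ne'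
end
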